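/- arXiv:2405.16149 — 2 statements merged into one kernel-verified Lean document; each statement's English description precedes it below -/
import Mathlib

section
/- In a minimum-size unsatisfiable (3,4)-formula, the in-clause-sets of two distinct variables of degree 3 are disjoint: if x and w are distinct variables each occurring in exactly 3 clauses, then no clause contains (a literal of) both x and (a literal of) w. -/
abbrev Lit := ℕ × Bool

def Lit.neg (l : Lit) : Lit := (l.1, !l.2)

abbrev Clause := Finset Lit

def Clause.nontaut (C : Clause) : Prop := ∀ l ∈ C, Lit.neg l ∉ C

instance (C : Clause) : Decidable (Clause.nontaut C) := by
  unfold Clause.nontaut; infer_instance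

abbrev CNF := Finset Clause

def satClause (τ : ℕ → Bool) (C : Clause) : Prop := ∃ l ∈ C, τ l.1 = l.2

def satCNF (τ : ℕ → Bool) (F : CNF) : Prop := ∀ C ∈ F, satClause τ C

def Satisfiable (F : CNF) : Prop := ∃ τ, satCNF τ F

def occ (F : CNF) (v : ℕ) : CNF := F.filter (fun C => (v, true) ∈ C ∨ (v, false) ∈ C)

def vdeg (F : CNF) (v : ℕ) : ℕ := (occ F v).card

def ldeg (F : CNF) (l : Lit) : ℕ := (F.filter (fun C => l ∈ C)).card

def vars (F : CNF) : Finset ℕ := F.sup (fun C => C.image Prod.fst)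

def isKCNF (k : ℕ) (F : CNF) : Prop := ∀ C ∈ F, Clause.nontaut C ∧ C.card = k

def KS (k s : ℕ) (F : CNF) : Prop := isKCNF k F ∧ ∀ v, vdeg F v ≤ s

def KPQ (k p q : ℕ) (F : CNF) : Prop :=
  isKCNF k F ∧ ∀ v, ldeg F (v, true) ≤ p ∧ ldeg F (v, false) ≤ q

def MinUnsat (F : CNF) : Prop := ¬ Satisfiable F ∧ ∀ C ∈ F, Satisfiable (F.erase C)

-- ===== helpers =====
lemma Lit.neg_neg (l : Lit) : l.neg.neg = l := by simp [Lit.neg]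

lemma Lit.neg_ne (l : Lit) : l.neg ≠ l := by
  intro h
  have := congrArg Prod.snd h
  simp [Lit.neg] at this

lemma Lit.neg_fst (l : Lit) : l.neg.1 = l.1 := rfl

lemma satClause_congr {τ τ' : ℕ → Bool} {C : Clause} (h : ∀ m ∈ C, τ m.1 = τ' m.1) :
    satClause τ C → satClause τ' C := by
  rintro ⟨m, hm, hv⟩; exact ⟨m, hm, (h m hm) ▸ hv⟩

lemma eq_of_var_eq {C : Clause} (hnt : Clause.nontaut C) {m m' : Lit}
    (hm : m ∈ C) (hm' : m' ∈ C) (hv : m.1 = m'.1) : m = m' := by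
  by_cases hb : m.2 = m'.2
  · exact Prod.ext hv hb
  · exfalso
    have : m.neg = m' := by
      have : m'.2 = !m.2 := by revert hb; cases m.2 <;> cases m'.2 <;> simp
      exact Prod.ext hv this.symm
    exact hnt m hm (this ▸ hm')

lemma var_ne {C : Clause} (hnt : Clause.nontaut C) {m m' : Lit}
    (hm : m ∈ C) (hm' : m' ∈ C) (hne : m ≠ m') : m.1 ≠ m'.1 :=
  fun h => hne (eq_of_var_eq hnt hm hm' h)

lemma mem_occ {F : CNF} {C : Clause} {m : Lit} (hC : C ∈ F) (hm : m ∈ C) :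
    C ∈ occ F m.1 := by
  refine Finset.mem_filter.2 ⟨hC, ?_⟩
  cases hb : m.2
  · right; rw [← hb, Prod.mk.eta]; exact hm
  · left; rw [← hb, Prod.mk.eta]; exact hm

lemma mem_vars {F : CNF} {C : Clause} {m : Lit} (hC : C ∈ F) (hm : m ∈ C) :
    m.1 ∈ vars F :=
  Finset.mem_sup.2 ⟨C, hC, Finset.mem_image.2 ⟨m, hm, rfl⟩⟩

lemma occ_fresh {F : CNF} {z : ℕ} (hz : z ∉ vars F) : occ F z = ∅ := by
  rw [Finset.eq_empty_iff_forall_notMem]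
  intro C hC
  rcases Finset.mem_filter.1 hC with ⟨hCF, h | h⟩
  · exact hz (mem_vars hCF h)
  · exact hz (mem_vars hCF h)

lemma nontaut_subset {C D : Clause} (h : D ⊆ C) (hC : Clause.nontaut C) :
    Clause.nontaut D := fun m hm hneg => hC m (h hm) (h hneg)

lemma nontaut_insert {C : Clause} {a : Lit} (hC : Clause.nontaut C)
    (hv : ∀ m ∈ C, m.1 ≠ a.1) : Clause.nontaut (insert a C) := by
  intro m hm hneg
  rcases Finset.mem_insert.1 hm with rfl | hm
  · rcases Finset.mem_insert.1 hneg with h | h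
    · exact Lit.neg_ne m h
    · exact hv _ h rfl
  · rcases Finset.mem_insert.1 hneg with h | h
    · exact hv m hm (by rw [← h]; rfl)
    · exact hC m hm h

lemma KS_subset {F G : CNF} (h : G ⊆ F) (hF : KS 3 4 F) : KS 3 4 G := by
  refine ⟨fun C hC => hF.1 C (h hC), fun v => ?_⟩
  exact le_trans (Finset.card_le_card (Finset.filter_subset_filter _ h)) (hF.2 v)

lemma occ_union (A B : CNF) (v : ℕ) : occ (A ∪ B) v = occ A v ∪ occ B v :=
  Finset.filter_union _ _ _

lemma occ_sdiff (A X : CNF) (v : ℕ) : occ (A \ X) v = occ A v \ X := by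
  ext C; simp only [occ, Finset.mem_filter, Finset.mem_sdiff]; tauto

lemma ldeg_add {F : CNF} (hK : isKCNF 3 F) (v : ℕ) :
    ldeg F (v, true) + ldeg F (v, false) = vdeg F v := by
  unfold ldeg vdeg occ
  rw [Finset.filter_or, Finset.card_union_of_disjoint]
  rw [Finset.disjoint_left]
  intro C h1 h2
  rcases Finset.mem_filter.1 h1 with ⟨hCF, ht⟩
  rcases Finset.mem_filter.1 h2 with ⟨-, hf⟩
  exact (hK C hCF).1 (v, true) ht hf

-- ===== minimality tools =====

lemma sat_of_card_lt {F G : CNF}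
    (hmin : ∀ G : CNF, KS 3 4 G → ¬ Satisfiable G → F.card ≤ G.card)
    (hG : KS 3 4 G) (hc : G.card < F.card) : Satisfiable G := by
  by_contra h
  exact absurd (hmin G hG h) (by omega)

lemma vdeg_bound {F : CNF} (X Y : CNF) (v : ℕ) (W : CNF)
    (hW : W ⊆ occ F v ∩ X) :
    vdeg ((F \ X) ∪ Y) v ≤ vdeg F v - W.card + (occ Y v).card := by
  unfold vdeg
  rw [occ_union, occ_sdiff]
  refine le_trans (Finset.card_union_le _ _) ?_
  have h1 : occ F v \ X ⊆ occ F v \ W := by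
    refine Finset.sdiff_subset_sdiff (le_refl _) ?_
    intro C hC; exact (Finset.mem_inter.1 (hW hC)).2
  have h2 : (occ F v \ W).card = (occ F v).card - W.card := by
    refine Finset.card_sdiff_of_subset ?_
    intro C hC; exact (Finset.mem_inter.1 (hW hC)).1
  have := Finset.card_le_card h1
  omega

lemma replaceLemma {F : CNF} (hF : KS 3 4 F) (hunsat : ¬ Satisfiable F)
    (hmin : ∀ G : CNF, KS 3 4 G → ¬ Satisfiable G → F.card ≤ G.card)
    (X Y : CNF) (hXF : X ⊆ F) (hc : Y.card < X.card)
    (hYK : ∀ D ∈ Y, Clause.nontaut D ∧ D.card = 3)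
    (hdeg : ∀ v, vdeg ((F \ X) ∪ Y) v ≤ 4)
    (hsat : Satisfiable ((F \ X) ∪ Y) → Satisfiable F) : False := by
  have hGK : KS 3 4 ((F \ X) ∪ Y) := by
    refine ⟨?_, hdeg⟩
    intro C hC
    rcases Finset.mem_union.1 hC with h | h
    · exact hF.1 C (Finset.mem_sdiff.1 h).1
    · exact hYK C h
  have hGc : ((F \ X) ∪ Y).card < F.card := by
    have h1 : (F \ X).card = F.card - X.card := Finset.card_sdiff_of_subset hXF
    have h2 : ((F \ X) ∪ Y).card ≤ (F \ X).card + Y.card := Finset.card_union_le _ _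
    have hX : X.card ≤ F.card := Finset.card_le_card hXF
    have hX0 : 0 < X.card := lt_of_le_of_lt (Nat.zero_le _) hc
    omega
  exact hunsat (hsat (sat_of_card_lt hmin hGK hGc))

-- ===== no pure literals =====
lemma nopure {F : CNF} (hF : KS 3 4 F) (hunsat : ¬ Satisfiable F)
    (hmin : ∀ G : CNF, KS 3 4 G → ¬ Satisfiable G → F.card ≤ G.card)
    {v : ℕ} (hv : 1 ≤ vdeg F v) (b : Bool) : 1 ≤ ldeg F (v, b) := by
  by_contra h
  have hzero : ∀ C ∈ F, (v, b) ∉ C := by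
    intro C hC hmem
    have : C ∈ F.filter (fun C => (v, b) ∈ C) := Finset.mem_filter.2 ⟨hC, hmem⟩
    have := Finset.card_pos.2 ⟨C, this⟩
    unfold ldeg at h; omega
  -- G = F \ occ F v is satisfiable
  have hsub : F \ occ F v ⊆ F := Finset.sdiff_subset
  have hne : (F \ occ F v).card < F.card := by
    obtain ⟨C, hC⟩ := Finset.card_pos.1 (lt_of_lt_of_le Nat.zero_lt_one hv)
    have hCF : C ∈ F := Finset.mem_of_mem_filter _ hC
    have : C ∉ F \ occ F v := fun hh => (Finset.mem_sdiff.1 hh).2 hC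
    have hss : F \ occ F v ⊂ F := ⟨hsub, fun hss => this (hss hCF)⟩
    exact Finset.card_lt_card hss
  obtain ⟨τ, hτ⟩ := sat_of_card_lt hmin (KS_subset hsub hF) hne
  set σ := Function.update τ v (!b) with hσ
  refine hunsat ⟨σ, ?_⟩
  intro C hC
  by_cases hocc : C ∈ occ F v
  · rcases Finset.mem_filter.1 hocc with ⟨-, hor⟩
    have hnb : (v, !b) ∈ C := by
      rcases hor with h1 | h1 <;> cases b <;> simp_all
    exact ⟨(v, !b), hnb, by simp [hσ]⟩
  · refine satClause_congr ?_ (hτ C (Finset.mem_sdiff.2 ⟨hC, hocc⟩))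
    intro m hm
    have : m.1 ≠ v := by
      intro hEq
      exact hocc (hEq ▸ mem_occ hC hm)
    simp [hσ, Function.update_of_ne this]


lemma lit_eq_or_neg {m r : Lit} (h : m.1 = r.1) : m = r ∨ m = Lit.neg r := by
  obtain ⟨a, b⟩ := m; obtain ⟨c, d⟩ := r
  simp only [Prod.mk.injEq] at h ⊢
  subst h
  cases b <;> cases d <;> simp [Lit.neg]

lemma nontaut_singleton (m : Lit) : Clause.nontaut {m} := by
  intro l hl hneg
  rw [Finset.mem_singleton] at hl hneg
  subst hl
  exact Lit.neg_ne l hneg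

lemma not_in_occ {F : CNF} {D : Clause} {x : ℕ} (hD : D ∈ F) (h : D ∉ occ F x) :
    ∀ b, (x, b) ∉ D := by
  intro b hb
  exact h (Finset.mem_filter.2 ⟨hD, by cases b; exacts [Or.inr hb, Or.inl hb]⟩)

lemma sat_untouched {D : Clause} {τ : ℕ → Bool} {x : ℕ} (hDx : ∀ b, (x, b) ∉ D)
    (b : Bool) (h : satClause τ D) : satClause (Function.update τ x b) D := by
  refine satClause_congr ?_ h
  intro m hm
  have hmx : m.1 ≠ x := by
    intro hEq
    exact hDx m.2 (by rw [← hEq, Prod.mk.eta]; exact hm)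
  exact (Function.update_of_ne hmx _ _).symm

lemma occ_card_le {Y : CNF} (v : ℕ) : (occ Y v).card ≤ Y.card :=
  Finset.card_le_card (Finset.filter_subset _ _)

lemma vdeg_bound2 {F : CNF} (X Y : CNF) (v : ℕ) (W : CNF)
    (hW : W ⊆ occ F v ∩ X) (hc : (occ Y v).card ≤ W.card) (h4 : vdeg F v ≤ 4) :
    vdeg ((F \ X) ∪ Y) v ≤ 4 := by
  have h1 := vdeg_bound (F := F) X Y v W hW
  have h2 : W.card ≤ vdeg F v := by
    refine Finset.card_le_card ?_
    intro C hC; exact (Finset.mem_inter.1 (hW hC)).1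
  omega

lemma card_triple {C1 C2 C3 : Clause} (h12 : C1 ≠ C2) (h13 : C1 ≠ C3) (h23 : C2 ≠ C3) :
    ({C1, C2, C3} : CNF).card = 3 := by
  rw [Finset.card_insert_of_notMem (by simp [h12, h13]),
    Finset.card_insert_of_notMem (by simp [h23]), Finset.card_singleton]

lemma card_quad {C1 C2 C3 E : Clause} (h12 : C1 ≠ C2) (h13 : C1 ≠ C3) (h23 : C2 ≠ C3)
    (h1E : C1 ≠ E) (h2E : C2 ≠ E) (h3E : C3 ≠ E) :
    ({C1, C2, C3, E} : CNF).card = 4 := by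
  rw [Finset.card_insert_of_notMem (by simp [h12, h13, h1E]),
    Finset.card_insert_of_notMem (by simp [h23, h2E]),
    Finset.card_insert_of_notMem (by simp [h3E]), Finset.card_singleton]

-- Strategy "P1": if some literal r of C1 (other than the x-literal) has its
-- negation in both C2 and C3, we get a contradiction.
lemma strategyP1 {F : CNF} (hF : KS 3 4 F) (hunsat : ¬ Satisfiable F)
    (hmin : ∀ G : CNF, KS 3 4 G → ¬ Satisfiable G → F.card ≤ G.card)
    {x : ℕ} {ε : Bool} {C1 C2 C3 : Clause}
    (hocc : occ F x = {C1, C2, C3}) (hC1F : C1 ∈ F) (hl1 : (x, ε) ∈ C1)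
    {r : Lit} (hrC1 : r ∈ C1) (hrx : r.1 ≠ x)
    (hn2 : Lit.neg r ∈ C2) (hn3 : Lit.neg r ∈ C3) : False := by
  have hsub : F.erase C1 ⊆ F := Finset.erase_subset _ _
  have hlt : (F.erase C1).card < F.card := by
    rw [Finset.card_erase_of_mem hC1F]
    have : 0 < F.card := Finset.card_pos.2 ⟨C1, hC1F⟩
    omega
  obtain ⟨τ, hτ⟩ := sat_of_card_lt hmin (KS_subset hsub hF) hlt
  have hfal : ¬ satClause τ C1 := by
    intro hsatC1
    refine hunsat ⟨τ, ?_⟩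
    intro D hD
    by_cases hDC1 : D = C1
    · exact hDC1 ▸ hsatC1
    · exact hτ D (Finset.mem_erase.2 ⟨hDC1, hD⟩)
  have hrval : τ r.1 = !r.2 := by
    have : ¬ (τ r.1 = r.2) := fun h => hfal ⟨r, hrC1, h⟩
    cases hb : τ r.1 <;> cases hb2 : r.2 <;> simp_all
  set σ := Function.update τ x ε with hσ
  refine hunsat ⟨σ, ?_⟩
  intro D hD
  by_cases hDX : D ∈ ({C1, C2, C3} : CNF)
  · rcases Finset.mem_insert.1 hDX with rfl | hDX'
    · exact ⟨(x, ε), hl1, Function.update_self _ _ _⟩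
    · have hnegr : Lit.neg r ∈ D := by
        rcases Finset.mem_insert.1 hDX' with rfl | h
        · exact hn2
        · rw [Finset.mem_singleton.1 h]; exact hn3
      refine ⟨Lit.neg r, hnegr, ?_⟩
      show σ (Lit.neg r).1 = (Lit.neg r).2
      have h1 : (Lit.neg r).1 = r.1 := rfl
      rw [h1, hσ, Function.update_of_ne hrx, hrval]
      rfl
  · have hDe : D ∈ F.erase C1 := by
      refine Finset.mem_erase.2 ⟨?_, hD⟩
      intro hEq; exact hDX (by rw [hEq]; exact Finset.mem_insert_self _ _)
    refine sat_untouched ?_ ε (hτ D hDe)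
    exact not_in_occ hD (fun h => hDX (hocc ▸ h))

-- Strategy "F": if the negation of a literal r of C1 occurs only in C2, C3.
lemma strategyF {F : CNF} (hF : KS 3 4 F) (hunsat : ¬ Satisfiable F)
    (hmin : ∀ G : CNF, KS 3 4 G → ¬ Satisfiable G → F.card ≤ G.card)
    {x : ℕ} {ε : Bool} {C1 C2 C3 : Clause}
    (hocc : occ F x = {C1, C2, C3}) (hC1F : C1 ∈ F)
    (hnl2 : (x, !ε) ∈ C2) (hnl3 : (x, !ε) ∈ C3)
    {r : Lit} (hrC1 : r ∈ C1) (hrx : r.1 ≠ x)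
    (hout : ∀ D ∈ F, Lit.neg r ∈ D → D = C2 ∨ D = C3) : False := by
  set X : CNF := {C1, C2, C3} with hX
  have hsub : F \ X ⊆ F := Finset.sdiff_subset
  have hlt : (F \ X).card < F.card := by
    have hC1X : C1 ∉ F \ X := by
      intro h
      exact (Finset.mem_sdiff.1 h).2 (Finset.mem_insert_self _ _)
    exact Finset.card_lt_card ⟨hsub, fun hss => hC1X (hss hC1F)⟩
  obtain ⟨τ, hτ⟩ := sat_of_card_lt hmin (KS_subset hsub hF) hlt
  set σ := Function.update (Function.update τ x (!ε)) r.1 r.2 with hσ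
  have hσr : σ r.1 = r.2 := Function.update_self _ _ _
  have hσx : σ x = !ε := by
    rw [hσ, Function.update_of_ne (Ne.symm hrx), Function.update_self]
  refine hunsat ⟨σ, ?_⟩
  intro D hD
  by_cases hDX : D ∈ X
  · rcases Finset.mem_insert.1 hDX with rfl | hDX'
    · exact ⟨r, hrC1, hσr⟩
    · have hnl : (x, !ε) ∈ D := by
        rcases Finset.mem_insert.1 hDX' with rfl | h
        · exact hnl2
        · rw [Finset.mem_singleton.1 h]; exact hnl3
      exact ⟨(x, !ε), hnl, hσx⟩
  · have hτD := hτ D (Finset.mem_sdiff.2 ⟨hD, hDX⟩)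
    obtain ⟨m, hm, hval⟩ := hτD
    by_cases hmr : m.1 = r.1
    · rcases lit_eq_or_neg hmr with rfl | rfl
      · exact ⟨m, hm, hσr⟩
      · exfalso
        rcases hout D hD hm with rfl | rfl
        · exact hDX (by rw [hX]; exact Finset.mem_insert_of_mem (Finset.mem_insert_self _ _))
        · exact hDX (by rw [hX]; exact Finset.mem_insert_of_mem (Finset.mem_insert_of_mem (Finset.mem_singleton_self _)))
    · have hmx : m.1 ≠ x := by
        intro hEq
        have hDocc : D ∉ occ F x := fun h => hDX (hocc ▸ h)
        exact (not_in_occ hD hDocc) m.2 (by rw [← hEq, Prod.mk.eta]; exact hm)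
      refine ⟨m, hm, ?_⟩
      rw [hσ, Function.update_of_ne hmr, Function.update_of_ne hmx]
      exact hval


-- Strategy "C": common literal z in C2 and C3 (but no companion ⇒ contradiction setup)
lemma strategyC {F : CNF} (hF : KS 3 4 F) (hunsat : ¬ Satisfiable F)
    (hmin : ∀ G : CNF, KS 3 4 G → ¬ Satisfiable G → F.card ≤ G.card)
    {x : ℕ} {ε : Bool} {C1 C2 C3 : Clause}
    (hocc : occ F x = {C1, C2, C3})
    (hC1F : C1 ∈ F) (hC2F : C2 ∈ F) (hC3F : C3 ∈ F)
    (hl1 : (x, ε) ∈ C1) (hnl2 : (x, !ε) ∈ C2) (hnl3 : (x, !ε) ∈ C3)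
    {p q z : Lit}
    (hpC1 : p ∈ C1) (hqC1 : q ∈ C1) (hpq : p ≠ q) (hpx : p.1 ≠ x) (hqx : q.1 ≠ x)
    (hzC2 : z ∈ C2) (hzC3 : z ∈ C3) (hzx : z.1 ≠ x)
    (hzp : z.1 ≠ p.1) (hzq : z.1 ≠ q.1)
    (hd12 : C1 ≠ C2) (hd13 : C1 ≠ C3) (hd23 : C2 ≠ C3) : False := by
  have hnt1 : Clause.nontaut C1 := (hF.1 C1 hC1F).1
  have hvpq : p.1 ≠ q.1 := var_ne hnt1 hpC1 hqC1 hpq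
  set X : CNF := {C1, C2, C3} with hX
  set D : Clause := insert p (insert q {z}) with hD
  set Y : CNF := {D} with hY
  have hXF : X ⊆ F := by
    intro C hC
    rcases Finset.mem_insert.1 hC with rfl | hC'
    · exact hC1F
    · rcases Finset.mem_insert.1 hC' with rfl | hC''
      · exact hC2F
      · rw [Finset.mem_singleton.1 hC'']; exact hC3F
  refine replaceLemma hF hunsat hmin X Y hXF ?_ ?_ ?_ ?_
  · rw [card_triple hd12 hd13 hd23, hY, Finset.card_singleton]
    omega
  · intro D' hD'
    rw [hY, Finset.mem_singleton] at hD'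
    subst hD'
    constructor
    · refine nontaut_insert (nontaut_insert (nontaut_singleton z) ?_) ?_
      · intro m hm
        rw [Finset.mem_singleton.1 hm]
        exact hzq
      · intro m hm
        rcases Finset.mem_insert.1 hm with rfl | hm'
        · exact hvpq.symm
        · rw [Finset.mem_singleton.1 hm']; exact hzp
    · have h1 : q ∉ ({z} : Clause) := by
        intro h
        exact hzq (congrArg Prod.fst (Finset.mem_singleton.1 h)).symm
      have h2 : p ∉ insert q ({z} : Clause) := by
        intro h
        rcases Finset.mem_insert.1 h with h' | h'
        · exact hpq h'
        · exact hzp (congrArg Prod.fst (Finset.mem_singleton.1 h')).symm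
      rw [hD, Finset.card_insert_of_notMem h2, Finset.card_insert_of_notMem h1,
        Finset.card_singleton]
  · -- degrees
    intro v
    have h4 := hF.2 v
    by_cases hv : v = p.1 ∨ v = q.1 ∨ v = z.1
    · have hY1 : (occ Y v).card ≤ 1 := by
        have := occ_card_le (Y := Y) v
        rw [hY, Finset.card_singleton] at this
        exact this
      rcases hv with rfl | rfl | rfl
      · refine vdeg_bound2 X Y p.1 {C1} ?_ (by rw [Finset.card_singleton]; exact hY1) h4
        intro C hC
        rw [Finset.mem_singleton.1 hC]
        exact Finset.mem_inter.2 ⟨mem_occ hC1F hpC1, Finset.mem_insert_self _ _⟩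
      · refine vdeg_bound2 X Y q.1 {C1} ?_ (by rw [Finset.card_singleton]; exact hY1) h4
        intro C hC
        rw [Finset.mem_singleton.1 hC]
        exact Finset.mem_inter.2 ⟨mem_occ hC1F hqC1, Finset.mem_insert_self _ _⟩
      · refine vdeg_bound2 X Y z.1 {C2} ?_ (by rw [Finset.card_singleton]; exact hY1) h4
        intro C hC
        rw [Finset.mem_singleton.1 hC]
        refine Finset.mem_inter.2 ⟨mem_occ hC2F hzC2, ?_⟩
        exact Finset.mem_insert_of_mem (Finset.mem_insert_self _ _)
    · push_neg at hv
      obtain ⟨hv1, hv2, hv3⟩ := hv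
      have hocc0 : occ Y v = ∅ := by
        rw [Finset.eq_empty_iff_forall_notMem]
        intro C hC
        rcases Finset.mem_filter.1 hC with ⟨hCY, hor⟩
        rw [hY, Finset.mem_singleton] at hCY
        subst hCY
        have hnot : ∀ b : Bool, (v, b) ∉ D := by
          intro b hb
          rw [hD] at hb
          rcases Finset.mem_insert.1 hb with h' | h'
          · exact hv1 (congrArg Prod.fst h')
          · rcases Finset.mem_insert.1 h' with h'' | h''
            · exact hv2 (congrArg Prod.fst h'')
            · exact hv3 (congrArg Prod.fst (Finset.mem_singleton.1 h''))
        rcases hor with h' | h'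
        · exact hnot true h'
        · exact hnot false h'
      refine vdeg_bound2 X Y v ∅ (Finset.empty_subset _) ?_ h4
      rw [hocc0]
  · -- satisfiability transfer
    rintro ⟨τ, hτ⟩
    have hτD : satClause τ D := hτ D (Finset.mem_union_right _ (Finset.mem_singleton_self D))
    obtain ⟨m, hm, hval⟩ := hτD
    rw [hD] at hm
    have main : ∀ (m' : Lit), m' ∈ C1 → m'.1 ≠ x → τ m'.1 = m'.2 → satCNF (Function.update τ x (!ε)) F := by
      intro m' hm' hm'x hm'val
      intro D' hD'
      by_cases hDX : D' ∈ X
      · rcases Finset.mem_insert.1 hDX with rfl | hDX'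
        · exact ⟨m', hm', by rw [Function.update_of_ne hm'x]; exact hm'val⟩
        · have : (x, !ε) ∈ D' := by
            rcases Finset.mem_insert.1 hDX' with rfl | h
            · exact hnl2
            · rw [Finset.mem_singleton.1 h]; exact hnl3
          exact ⟨(x, !ε), this, Function.update_self _ _ _⟩
      · refine sat_untouched (not_in_occ hD' (fun h => hDX (hocc ▸ h))) _
          (hτ D' (Finset.mem_union_left _ (Finset.mem_sdiff.2 ⟨hD', hDX⟩)))
    rcases Finset.mem_insert.1 hm with rfl | hm'
    · exact ⟨_, main m hpC1 hpx hval⟩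
    · rcases Finset.mem_insert.1 hm' with rfl | hm''
      · exact ⟨_, main m hqC1 hqx hval⟩
      · -- m = z : set x to ε
        rw [Finset.mem_singleton.1 hm''] at hval
        refine ⟨Function.update τ x ε, ?_⟩
        intro D' hD'
        by_cases hDX : D' ∈ X
        · rcases Finset.mem_insert.1 hDX with rfl | hDX'
          · exact ⟨(x, ε), hl1, Function.update_self _ _ _⟩
          · have hzD : z ∈ D' := by
              rcases Finset.mem_insert.1 hDX' with rfl | h
              · exact hzC2
              · rw [Finset.mem_singleton.1 h]; exact hzC3
            exact ⟨z, hzD, by rw [Function.update_of_ne hzx]; exact hval⟩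
        · refine sat_untouched (not_in_occ hD' (fun h => hDX (hocc ▸ h))) _
            (hτ D' (Finset.mem_union_left _ (Finset.mem_sdiff.2 ⟨hD', hDX⟩)))


-- Strategy "D": fresh-variable splitting {p,q,z},{p,q,¬z}
lemma strategyD {F : CNF} (hF : KS 3 4 F) (hunsat : ¬ Satisfiable F)
    (hmin : ∀ G : CNF, KS 3 4 G → ¬ Satisfiable G → F.card ≤ G.card)
    {x : ℕ} {ε : Bool} {C1 C2 C3 : Clause}
    (hocc : occ F x = {C1, C2, C3})
    (hC1F : C1 ∈ F) (hC2F : C2 ∈ F) (hC3F : C3 ∈ F)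
    (hl1 : (x, ε) ∈ C1) (hnl2 : (x, !ε) ∈ C2) (hnl3 : (x, !ε) ∈ C3)
    {p q : Lit}
    (hpC1 : p ∈ C1) (hqC1 : q ∈ C1) (hpq : p ≠ q) (hpx : p.1 ≠ x) (hqx : q.1 ≠ x)
    (hd12 : C1 ≠ C2) (hd13 : C1 ≠ C3) (hd23 : C2 ≠ C3)
    (hHp : vdeg F p.1 ≤ (occ F p.1 ∩ {C1, C2, C3}).card + 2)
    (hHq : vdeg F q.1 ≤ (occ F q.1 ∩ {C1, C2, C3}).card + 2) : False := by
  have hnt1 : Clause.nontaut C1 := (hF.1 C1 hC1F).1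
  have hvpq : p.1 ≠ q.1 := var_ne hnt1 hpC1 hqC1 hpq
  obtain ⟨z, hz⟩ := Infinite.exists_notMem_finset (vars F)
  have hzp : z ≠ p.1 := fun h => hz (h ▸ mem_vars hC1F hpC1)
  have hzq : z ≠ q.1 := fun h => hz (h ▸ mem_vars hC1F hqC1)
  set X : CNF := {C1, C2, C3} with hX
  have hXF : X ⊆ F := by
    intro C hC
    rcases Finset.mem_insert.1 hC with rfl | hC'
    · exact hC1F
    · rcases Finset.mem_insert.1 hC' with rfl | hC''
      · exact hC2F
      · rw [Finset.mem_singleton.1 hC'']; exact hC3F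
  have hDfacts : ∀ b : Bool, Clause.nontaut (insert p (insert q {((z, b) : Lit)}))
      ∧ Finset.card (insert p (insert q ({((z, b) : Lit)} : Clause))) = 3 := by
    intro b
    constructor
    · refine nontaut_insert (nontaut_insert (nontaut_singleton _) ?_) ?_
      · intro m hm
        rw [Finset.mem_singleton.1 hm]
        exact hzq
      · intro m hm
        rcases Finset.mem_insert.1 hm with rfl | hm'
        · exact hvpq.symm
        · rw [Finset.mem_singleton.1 hm']; exact hzp
    · have h1 : q ∉ ({((z, b) : Lit)} : Clause) := by
        intro h
        exact hzq (congrArg Prod.fst (Finset.mem_singleton.1 h)).symm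
      have h2 : p ∉ insert q ({((z, b) : Lit)} : Clause) := by
        intro h
        rcases Finset.mem_insert.1 h with h' | h'
        · exact hpq h'
        · exact hzp (congrArg Prod.fst (Finset.mem_singleton.1 h')).symm
      rw [Finset.card_insert_of_notMem h2, Finset.card_insert_of_notMem h1,
        Finset.card_singleton]
  set D1 : Clause := insert p (insert q {(z, true)}) with hD1
  set D2 : Clause := insert p (insert q {(z, false)}) with hD2
  set Y : CNF := {D1, D2} with hY
  have hmemD : ∀ {b : Bool} {v : ℕ} {c : Bool},
      ((v, c) : Lit) ∈ insert p (insert q ({((z, b) : Lit)} : Clause)) → v = p.1 ∨ v = q.1 ∨ v = z := by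
    intro b v c h
    rcases Finset.mem_insert.1 h with h' | h'
    · exact Or.inl (congrArg Prod.fst h')
    · rcases Finset.mem_insert.1 h' with h'' | h''
      · exact Or.inr (Or.inl (congrArg Prod.fst h''))
      · exact Or.inr (Or.inr (congrArg Prod.fst (Finset.mem_singleton.1 h'')))
  refine replaceLemma hF hunsat hmin X Y hXF ?_ ?_ ?_ ?_
  · have : Y.card ≤ 2 := by
      rw [hY]
      exact le_trans (Finset.card_insert_le _ _) (by rw [Finset.card_singleton])
    rw [card_triple hd12 hd13 hd23]
    omega
  · intro D' hD'
    rcases Finset.mem_insert.1 hD' with rfl | hD''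
    · exact hDfacts true
    · rw [Finset.mem_singleton.1 hD'']
      exact hDfacts false
  · -- degrees
    intro v
    have h4 := hF.2 v
    have hY2 : (occ Y v).card ≤ 2 := by
      refine le_trans (occ_card_le v) ?_
      rw [hY]
      exact le_trans (Finset.card_insert_le _ _) (by rw [Finset.card_singleton])
    by_cases hvz : v = z
    · subst hvz
      have hv0 : vdeg F v = 0 := by
        unfold vdeg
        rw [occ_fresh hz, Finset.card_empty]
      have := vdeg_bound (F := F) X Y v ∅ (Finset.empty_subset _)
      rw [Finset.card_empty] at this
      omega
    · by_cases hvp : v = p.1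
      · rw [← hvp] at hHp
        have := vdeg_bound (F := F) X Y v (occ F v ∩ X) (le_refl _)
        have hWocc : (occ F v ∩ X).card ≤ vdeg F v :=
          Finset.card_le_card (Finset.inter_subset_left)
        omega
      · by_cases hvq : v = q.1
        · rw [← hvq] at hHq
          have := vdeg_bound (F := F) X Y v (occ F v ∩ X) (le_refl _)
          have hWocc : (occ F v ∩ X).card ≤ vdeg F v :=
            Finset.card_le_card (Finset.inter_subset_left)
          omega
        · have hocc0 : occ Y v = ∅ := by
            rw [Finset.eq_empty_iff_forall_notMem]
            intro C hC
            rcases Finset.mem_filter.1 hC with ⟨hCY, hor⟩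
            have hvin : v = p.1 ∨ v = q.1 ∨ v = z := by
              rcases Finset.mem_insert.1 hCY with rfl | hCY'
              · rcases hor with h' | h'
                · exact hmemD h'
                · exact hmemD h'
              · rw [Finset.mem_singleton] at hCY'
                subst hCY'
                rcases hor with h' | h'
                · exact hmemD h'
                · exact hmemD h'
            rcases hvin with h | h | h
            exacts [hvp h, hvq h, hvz h]
          refine vdeg_bound2 X Y v ∅ (Finset.empty_subset _) ?_ h4
          rw [hocc0]
  · -- satisfiability transfer
    rintro ⟨τ, hτ⟩
    have hτD1 : satClause τ D1 := hτ D1 (Finset.mem_union_right _ (Finset.mem_insert_self _ _))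
    have hτD2 : satClause τ D2 := hτ D2 (Finset.mem_union_right _
      (Finset.mem_insert_of_mem (Finset.mem_singleton_self _)))
    have hor : τ p.1 = p.2 ∨ τ q.1 = q.2 := by
      by_cases hτz : τ z = true
      · obtain ⟨m, hm, hval⟩ := hτD2
        rw [hD2] at hm
        rcases Finset.mem_insert.1 hm with rfl | hm'
        · exact Or.inl hval
        · rcases Finset.mem_insert.1 hm' with rfl | hm''
          · exact Or.inr hval
          · rw [Finset.mem_singleton] at hm''
            subst hm''
            rw [hτz] at hval
            exact absurd hval.symm (by simp)
      · obtain ⟨m, hm, hval⟩ := hτD1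
        rw [hD1] at hm
        rcases Finset.mem_insert.1 hm with rfl | hm'
        · exact Or.inl hval
        · rcases Finset.mem_insert.1 hm' with rfl | hm''
          · exact Or.inr hval
          · rw [Finset.mem_singleton] at hm''
            subst hm''
            exact absurd hval hτz
    refine ⟨Function.update τ x (!ε), ?_⟩
    intro D' hD'
    by_cases hDX : D' ∈ X
    · rcases Finset.mem_insert.1 hDX with rfl | hDX'
      · rcases hor with h | h
        · exact ⟨p, hpC1, by rw [Function.update_of_ne hpx]; exact h⟩
        · exact ⟨q, hqC1, by rw [Function.update_of_ne hqx]; exact h⟩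
      · have : (x, !ε) ∈ D' := by
          rcases Finset.mem_insert.1 hDX' with rfl | h
          · exact hnl2
          · rw [Finset.mem_singleton.1 h]; exact hnl3
        exact ⟨(x, !ε), this, Function.update_self _ _ _⟩
    · exact sat_untouched (not_in_occ hD' (fun h => hDX (hocc ▸ h))) _
        (hτ D' (Finset.mem_union_left _ (Finset.mem_sdiff.2 ⟨hD', hDX⟩)))


-- facts about the erase of the x-literal
lemma erase_facts {C : Clause} (hnt : Clause.nontaut C) {x : ℕ} {ε : Bool}
    (hnl : (x, !ε) ∈ C) {m : Lit} (hm : m ∈ C.erase (x, !ε)) :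
    m ∈ C ∧ m.1 ≠ x := by
  have hmC := Finset.mem_of_mem_erase hm
  have hne := Finset.ne_of_mem_erase hm
  exact ⟨hmC, var_ne hnt hmC hnl hne⟩

-- Strategy "A": resolvent-style replacement when p avoids C2 and q avoids C3
lemma strategyA {F : CNF} (hF : KS 3 4 F) (hunsat : ¬ Satisfiable F)
    (hmin : ∀ G : CNF, KS 3 4 G → ¬ Satisfiable G → F.card ≤ G.card)
    {x : ℕ} {ε : Bool} {C1 C2 C3 : Clause}
    (hocc : occ F x = {C1, C2, C3})
    (hC1F : C1 ∈ F) (hC2F : C2 ∈ F) (hC3F : C3 ∈ F)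
    (hl1 : (x, ε) ∈ C1) (hnl2 : (x, !ε) ∈ C2) (hnl3 : (x, !ε) ∈ C3)
    {p q : Lit}
    (hpC1 : p ∈ C1) (hqC1 : q ∈ C1) (hpq : p ≠ q) (hpx : p.1 ≠ x) (hqx : q.1 ≠ x)
    (hd12 : C1 ≠ C2) (hd13 : C1 ≠ C3) (hd23 : C2 ≠ C3)
    (hp2 : ∀ b, ((p.1, b) : Lit) ∉ C2) (hq3 : ∀ b, ((q.1, b) : Lit) ∉ C3) : False := by
  have hnt1 : Clause.nontaut C1 := (hF.1 C1 hC1F).1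
  have hnt2 : Clause.nontaut C2 := (hF.1 C2 hC2F).1
  have hnt3 : Clause.nontaut C3 := (hF.1 C3 hC3F).1
  have hc2 : C2.card = 3 := (hF.1 C2 hC2F).2
  have hc3 : C3.card = 3 := (hF.1 C3 hC3F).2
  have hvpq : p.1 ≠ q.1 := var_ne hnt1 hpC1 hqC1 hpq
  set B2 : Clause := C2.erase (x, !ε) with hB2
  set B3 : Clause := C3.erase (x, !ε) with hB3
  set D2 : Clause := insert p B2 with hD2
  set D3 : Clause := insert q B3 with hD3
  set X : CNF := {C1, C2, C3} with hX
  set Y : CNF := {D2, D3} with hY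
  have hXF : X ⊆ F := by
    intro C hC
    rcases Finset.mem_insert.1 hC with rfl | hC'
    · exact hC1F
    · rcases Finset.mem_insert.1 hC' with rfl | hC''
      · exact hC2F
      · rw [Finset.mem_singleton.1 hC'']; exact hC3F
  have hpB2 : p ∉ B2 := by
    intro h
    exact hp2 p.2 (by rw [Prod.mk.eta]; exact (erase_facts hnt2 hnl2 h).1)
  have hqB3 : q ∉ B3 := by
    intro h
    exact hq3 q.2 (by rw [Prod.mk.eta]; exact (erase_facts hnt3 hnl3 h).1)
  have hY2 : Y.card ≤ 2 := le_trans (Finset.card_insert_le _ _) (by rw [Finset.card_singleton])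
  -- membership analysis for the new clauses
  have hmemD2 : ∀ {v : ℕ} {c : Bool}, ((v, c) : Lit) ∈ D2 → v = p.1 ∨ C2 ∈ occ F v := by
    intro v c h
    rcases Finset.mem_insert.1 h with h' | h'
    · exact Or.inl (congrArg Prod.fst h')
    · exact Or.inr (mem_occ hC2F (erase_facts hnt2 hnl2 h').1)
  have hmemD3 : ∀ {v : ℕ} {c : Bool}, ((v, c) : Lit) ∈ D3 → v = q.1 ∨ C3 ∈ occ F v := by
    intro v c h
    rcases Finset.mem_insert.1 h with h' | h'
    · exact Or.inl (congrArg Prod.fst h')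
    · exact Or.inr (mem_occ hC3F (erase_facts hnt3 hnl3 h').1)
  refine replaceLemma hF hunsat hmin X Y hXF ?_ ?_ ?_ ?_
  · rw [card_triple hd12 hd13 hd23]; omega
  · intro D' hD'
    have main2 : Clause.nontaut D2 ∧ D2.card = 3 := by
      constructor
      · refine nontaut_insert (nontaut_subset (Finset.erase_subset _ _) hnt2) ?_
        intro m hm hEq
        exact hp2 m.2 (by rw [← hEq, Prod.mk.eta]; exact (erase_facts hnt2 hnl2 hm).1)
      · rw [hD2, Finset.card_insert_of_notMem hpB2, hB2,
          Finset.card_erase_of_mem hnl2, hc2]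
    have main3 : Clause.nontaut D3 ∧ D3.card = 3 := by
      constructor
      · refine nontaut_insert (nontaut_subset (Finset.erase_subset _ _) hnt3) ?_
        intro m hm hEq
        exact hq3 m.2 (by rw [← hEq, Prod.mk.eta]; exact (erase_facts hnt3 hnl3 hm).1)
      · rw [hD3, Finset.card_insert_of_notMem hqB3, hB3,
          Finset.card_erase_of_mem hnl3, hc3]
    rcases Finset.mem_insert.1 hD' with rfl | hD''
    · exact main2
    · rw [Finset.mem_singleton.1 hD'']; exact main3
  · -- degrees
    intro v
    have h4 := hF.2 v
    have hYv2 : (occ Y v).card ≤ 2 := le_trans (occ_card_le v) hY2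
    by_cases hv2 : ((v, true) : Lit) ∈ D2 ∨ ((v, false) : Lit) ∈ D2
    · by_cases hv3 : ((v, true) : Lit) ∈ D3 ∨ ((v, false) : Lit) ∈ D3
      · -- v occurs in both new clauses
        have hA2 : v = p.1 ∨ C2 ∈ occ F v := by
          rcases hv2 with h | h
          exacts [hmemD2 h, hmemD2 h]
        have hA3 : v = q.1 ∨ C3 ∈ occ F v := by
          rcases hv3 with h | h
          exacts [hmemD3 h, hmemD3 h]
        rcases hA2 with rfl | hA2'
        · rcases hA3 with hq' | hA3'
          · exact absurd hq' hvpq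
          · refine vdeg_bound2 X Y p.1 {C1, C3} ?_ ?_ h4
            · intro C hC
              rcases Finset.mem_insert.1 hC with rfl | hC'
              · exact Finset.mem_inter.2 ⟨mem_occ hC1F hpC1, Finset.mem_insert_self _ _⟩
              · rw [Finset.mem_singleton.1 hC']
                exact Finset.mem_inter.2 ⟨hA3',
                  Finset.mem_insert_of_mem (Finset.mem_insert_of_mem (Finset.mem_singleton_self _))⟩
            · rw [Finset.card_insert_of_notMem (by simp [hd13]), Finset.card_singleton]
              exact hYv2
        · rcases hA3 with rfl | hA3'
          · refine vdeg_bound2 X Y q.1 {C1, C2} ?_ ?_ h4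
            · intro C hC
              rcases Finset.mem_insert.1 hC with rfl | hC'
              · exact Finset.mem_inter.2 ⟨mem_occ hC1F hqC1, Finset.mem_insert_self _ _⟩
              · rw [Finset.mem_singleton.1 hC']
                exact Finset.mem_inter.2 ⟨hA2',
                  Finset.mem_insert_of_mem (Finset.mem_insert_self _ _)⟩
            · rw [Finset.card_insert_of_notMem (by simp [hd12]), Finset.card_singleton]
              exact hYv2
          · refine vdeg_bound2 X Y v {C2, C3} ?_ ?_ h4
            · intro C hC
              rcases Finset.mem_insert.1 hC with rfl | hC'
              · exact Finset.mem_inter.2 ⟨hA2',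
                  Finset.mem_insert_of_mem (Finset.mem_insert_self _ _)⟩
              · rw [Finset.mem_singleton.1 hC']
                exact Finset.mem_inter.2 ⟨hA3',
                  Finset.mem_insert_of_mem (Finset.mem_insert_of_mem (Finset.mem_singleton_self _))⟩
            · rw [Finset.card_insert_of_notMem (by simp [hd23]), Finset.card_singleton]
              exact hYv2
      · -- v occurs only in D2
        have hsub : occ Y v ⊆ {D2} := by
          intro C hC
          rcases Finset.mem_filter.1 hC with ⟨hCY, hor⟩
          rcases Finset.mem_insert.1 hCY with rfl | hCY'
          · exact Finset.mem_singleton_self _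
          · rw [Finset.mem_singleton] at hCY'
            subst hCY'
            exact absurd hor hv3
        have hle1 : (occ Y v).card ≤ 1 := by
          refine le_trans (Finset.card_le_card hsub) ?_
          rw [Finset.card_singleton]
        have hA2 : v = p.1 ∨ C2 ∈ occ F v := by
          rcases hv2 with h | h
          exacts [hmemD2 h, hmemD2 h]
        rcases hA2 with rfl | hA2'
        · refine vdeg_bound2 X Y p.1 {C1} ?_ (by rw [Finset.card_singleton]; exact hle1) h4
          intro C hC
          rw [Finset.mem_singleton.1 hC]
          exact Finset.mem_inter.2 ⟨mem_occ hC1F hpC1, Finset.mem_insert_self _ _⟩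
        · refine vdeg_bound2 X Y v {C2} ?_ (by rw [Finset.card_singleton]; exact hle1) h4
          intro C hC
          rw [Finset.mem_singleton.1 hC]
          exact Finset.mem_inter.2 ⟨hA2',
            Finset.mem_insert_of_mem (Finset.mem_insert_self _ _)⟩
    · by_cases hv3 : ((v, true) : Lit) ∈ D3 ∨ ((v, false) : Lit) ∈ D3
      · -- v occurs only in D3
        have hsub : occ Y v ⊆ {D3} := by
          intro C hC
          rcases Finset.mem_filter.1 hC with ⟨hCY, hor⟩
          rcases Finset.mem_insert.1 hCY with rfl | hCY'
          · exact absurd hor hv2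
          · exact hCY'
        have hle1 : (occ Y v).card ≤ 1 := by
          refine le_trans (Finset.card_le_card hsub) ?_
          rw [Finset.card_singleton]
        have hA3 : v = q.1 ∨ C3 ∈ occ F v := by
          rcases hv3 with h | h
          exacts [hmemD3 h, hmemD3 h]
        rcases hA3 with rfl | hA3'
        · refine vdeg_bound2 X Y q.1 {C1} ?_ (by rw [Finset.card_singleton]; exact hle1) h4
          intro C hC
          rw [Finset.mem_singleton.1 hC]
          exact Finset.mem_inter.2 ⟨mem_occ hC1F hqC1, Finset.mem_insert_self _ _⟩
        · refine vdeg_bound2 X Y v {C3} ?_ (by rw [Finset.card_singleton]; exact hle1) h4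
          intro C hC
          rw [Finset.mem_singleton.1 hC]
          exact Finset.mem_inter.2 ⟨hA3',
            Finset.mem_insert_of_mem (Finset.mem_insert_of_mem (Finset.mem_singleton_self _))⟩
      · -- v occurs in neither
        have hocc0 : occ Y v = ∅ := by
          rw [Finset.eq_empty_iff_forall_notMem]
          intro C hC
          rcases Finset.mem_filter.1 hC with ⟨hCY, hor⟩
          rcases Finset.mem_insert.1 hCY with rfl | hCY'
          · exact hv2 hor
          · rw [Finset.mem_singleton] at hCY'
            subst hCY'
            exact hv3 hor
        refine vdeg_bound2 X Y v ∅ (Finset.empty_subset _) ?_ h4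
        rw [hocc0]
  · -- satisfiability transfer
    rintro ⟨τ, hτ⟩
    have hτD2 : satClause τ D2 := hτ D2 (Finset.mem_union_right _ (Finset.mem_insert_self _ _))
    have hτD3 : satClause τ D3 := hτ D3 (Finset.mem_union_right _
      (Finset.mem_insert_of_mem (Finset.mem_singleton_self _)))
    have hrest : ∀ {σ : ℕ → Bool} (b : Bool), (∀ y, y ≠ x → σ y = τ y) → True := fun _ _ => trivial
    by_cases h1 : τ p.1 = p.2
    · refine ⟨Function.update τ x (!ε), ?_⟩
      intro D' hD'
      by_cases hDX : D' ∈ X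
      · rcases Finset.mem_insert.1 hDX with rfl | hDX'
        · exact ⟨p, hpC1, by rw [Function.update_of_ne hpx]; exact h1⟩
        · have : (x, !ε) ∈ D' := by
            rcases Finset.mem_insert.1 hDX' with rfl | h
            · exact hnl2
            · rw [Finset.mem_singleton.1 h]; exact hnl3
          exact ⟨(x, !ε), this, Function.update_self _ _ _⟩
      · exact sat_untouched (not_in_occ hD' (fun h => hDX (hocc ▸ h))) _
          (hτ D' (Finset.mem_union_left _ (Finset.mem_sdiff.2 ⟨hD', hDX⟩)))
    · by_cases h2 : τ q.1 = q.2
      · refine ⟨Function.update τ x (!ε), ?_⟩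
        intro D' hD'
        by_cases hDX : D' ∈ X
        · rcases Finset.mem_insert.1 hDX with rfl | hDX'
          · exact ⟨q, hqC1, by rw [Function.update_of_ne hqx]; exact h2⟩
          · have : (x, !ε) ∈ D' := by
              rcases Finset.mem_insert.1 hDX' with rfl | h
              · exact hnl2
              · rw [Finset.mem_singleton.1 h]; exact hnl3
            exact ⟨(x, !ε), this, Function.update_self _ _ _⟩
        · exact sat_untouched (not_in_occ hD' (fun h => hDX (hocc ▸ h))) _
            (hτ D' (Finset.mem_union_left _ (Finset.mem_sdiff.2 ⟨hD', hDX⟩)))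
      · -- witnesses inside B2, B3 : set x := ε
        obtain ⟨m2, hm2, hval2⟩ := hτD2
        have hm2B : m2 ∈ B2 := by
          rcases Finset.mem_insert.1 hm2 with rfl | h
          · exact absurd hval2 h1
          · exact h
        obtain ⟨m3, hm3, hval3⟩ := hτD3
        have hm3B : m3 ∈ B3 := by
          rcases Finset.mem_insert.1 hm3 with rfl | h
          · exact absurd hval3 h2
          · exact h
        obtain ⟨hm2C2, hm2x⟩ := erase_facts hnt2 hnl2 hm2B
        obtain ⟨hm3C3, hm3x⟩ := erase_facts hnt3 hnl3 hm3B
        refine ⟨Function.update τ x ε, ?_⟩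
        intro D' hD'
        by_cases hDX : D' ∈ X
        · rcases Finset.mem_insert.1 hDX with rfl | hDX'
          · exact ⟨(x, ε), hl1, Function.update_self _ _ _⟩
          · rcases Finset.mem_insert.1 hDX' with rfl | h
            · exact ⟨m2, hm2C2, by rw [Function.update_of_ne hm2x]; exact hval2⟩
            · rw [Finset.mem_singleton.1 h]
              exact ⟨m3, hm3C3, by rw [Function.update_of_ne hm3x]; exact hval3⟩
        · exact sat_untouched (not_in_occ hD' (fun h => hDX (hocc ▸ h))) _
            (hτ D' (Finset.mem_union_left _ (Finset.mem_sdiff.2 ⟨hD', hDX⟩)))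


-- Strategy "E": the hard mixed case
lemma strategyE {F : CNF} (hF : KS 3 4 F) (hunsat : ¬ Satisfiable F)
    (hmin : ∀ G : CNF, KS 3 4 G → ¬ Satisfiable G → F.card ≤ G.card)
    {x : ℕ} {ε : Bool} {C1 C2 C3 E : Clause}
    (hocc : occ F x = {C1, C2, C3})
    (hC1F : C1 ∈ F) (hC2F : C2 ∈ F) (hC3F : C3 ∈ F)
    (hl1 : (x, ε) ∈ C1) (hnl2 : (x, !ε) ∈ C2) (hnl3 : (x, !ε) ∈ C3)
    {p q : Lit}
    (hpC1 : p ∈ C1) (hqC1 : q ∈ C1) (hpq : p ≠ q) (hpx : p.1 ≠ x) (hqx : q.1 ≠ x)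
    (hd12 : C1 ≠ C2) (hd13 : C1 ≠ C3) (hd23 : C2 ≠ C3)
    (hp2 : ∀ b, ((p.1, b) : Lit) ∉ C2) (hp3 : ∀ b, ((p.1, b) : Lit) ∉ C3)
    (hqC2 : q ∈ C2) (hnqC3 : Lit.neg q ∈ C3)
    (hEF : E ∈ F) (hnqE : Lit.neg q ∈ E) (hE2 : E ≠ C2) (hE3 : E ≠ C3) : False := by
  have hnt1 : Clause.nontaut C1 := (hF.1 C1 hC1F).1
  have hnt2 : Clause.nontaut C2 := (hF.1 C2 hC2F).1
  have hntE : Clause.nontaut E := (hF.1 E hEF).1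
  have hc2 : C2.card = 3 := (hF.1 C2 hC2F).2
  have hcE : E.card = 3 := (hF.1 E hEF).2
  have hvpq : p.1 ≠ q.1 := var_ne hnt1 hpC1 hqC1 hpq
  have hE1 : E ≠ C1 := by
    intro rfl1
    exact hnt1 q hqC1 (rfl1 ▸ hnqE)
  -- occ F q.1 is exactly {C1, C2, C3, E}
  have hqquad : ({C1, C2, C3, E} : CNF) ⊆ occ F q.1 := by
    intro C hC
    rcases Finset.mem_insert.1 hC with rfl | hC'
    · exact mem_occ hC1F hqC1
    · rcases Finset.mem_insert.1 hC' with rfl | hC''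
      · exact mem_occ hC2F hqC2
      · rcases Finset.mem_insert.1 hC'' with rfl | hC'''
        · exact mem_occ (m := Lit.neg q) hC3F hnqC3
        · rw [Finset.mem_singleton.1 hC''']
          exact mem_occ (m := Lit.neg q) hEF hnqE
  have hcardquad : ({C1, C2, C3, E} : CNF).card = 4 :=
    card_quad hd12 hd13 hd23 (Ne.symm hE1) (Ne.symm hE2) (Ne.symm hE3)
  have hoccq : occ F q.1 = {C1, C2, C3, E} := by
    refine (Finset.eq_of_subset_of_card_le hqquad ?_).symm
    rw [hcardquad]
    exact hF.2 q.1
  -- extract v' from C2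
  have hqnex : q ≠ (x, !ε) := by
    intro h
    exact hqx (congrArg Prod.fst h)
  have hB2c : ((C2.erase (x, !ε)).erase q).card = 1 := by
    rw [Finset.card_erase_of_mem (Finset.mem_erase.2 ⟨hqnex, hqC2⟩),
      Finset.card_erase_of_mem hnl2, hc2]
  obtain ⟨v', hv'⟩ := Finset.card_eq_one.1 hB2c
  have hv'B2 : v' ∈ C2.erase (x, !ε) := by
    have : v' ∈ (C2.erase (x, !ε)).erase q := by
      rw [hv']; exact Finset.mem_singleton_self _
    exact Finset.mem_of_mem_erase this
  have hv'q : v' ≠ q := by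
    have : v' ∈ (C2.erase (x, !ε)).erase q := by
      rw [hv']; exact Finset.mem_singleton_self _
    exact Finset.ne_of_mem_erase this
  obtain ⟨hv'C2, hv'x⟩ := erase_facts hnt2 hnl2 hv'B2
  have hv'vq : v'.1 ≠ q.1 := var_ne hnt2 hv'C2 hqC2 hv'q
  have hv'vp : v'.1 ≠ p.1 := by
    intro h
    exact hp2 v'.2 (by rw [← h, Prod.mk.eta]; exact hv'C2)
  -- extract e1 e2 from E
  have hEBc : (E.erase (Lit.neg q)).card = 2 := by
    rw [Finset.card_erase_of_mem hnqE, hcE]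
  obtain ⟨e1, e2, hee, hEB⟩ := Finset.card_eq_two.1 hEBc
  have he1EB : e1 ∈ E.erase (Lit.neg q) := by rw [hEB]; exact Finset.mem_insert_self _ _
  have he2EB : e2 ∈ E.erase (Lit.neg q) := by
    rw [hEB]; exact Finset.mem_insert_of_mem (Finset.mem_singleton_self _)
  have he1E : e1 ∈ E := Finset.mem_of_mem_erase he1EB
  have he2E : e2 ∈ E := Finset.mem_of_mem_erase he2EB
  have he1vq : e1.1 ≠ q.1 :=
    var_ne (m' := Lit.neg q) hntE he1E hnqE (Finset.ne_of_mem_erase he1EB)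
  have he2vq : e2.1 ≠ q.1 :=
    var_ne (m' := Lit.neg q) hntE he2E hnqE (Finset.ne_of_mem_erase he2EB)
  have hEoccx : E ∉ occ F x := by
    rw [hocc]
    intro h
    rcases Finset.mem_insert.1 h with h' | h'
    · exact hE1 h'
    · rcases Finset.mem_insert.1 h' with h'' | h''
      · exact hE2 h''
      · exact hE3 (Finset.mem_singleton.1 h'')
  have hExlit : ∀ b, ((x, b) : Lit) ∉ E := not_in_occ hEF hEoccx
  have he1x : e1.1 ≠ x := by
    intro h
    exact hExlit e1.2 (by rw [← h, Prod.mk.eta]; exact he1E)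
  have he2x : e2.1 ≠ x := by
    intro h
    exact hExlit e2.2 (by rw [← h, Prod.mk.eta]; exact he2E)
  -- fresh variable
  obtain ⟨z, hz⟩ := Infinite.exists_notMem_finset (vars F)
  have hzp : z ≠ p.1 := fun h => hz (h ▸ mem_vars hC1F hpC1)
  have hzv' : z ≠ v'.1 := fun h => hz (h ▸ mem_vars hC2F hv'C2)
  have hze1 : z ≠ e1.1 := fun h => hz (h ▸ mem_vars hEF he1E)
  have hze2 : z ≠ e2.1 := fun h => hz (h ▸ mem_vars hEF he2E)
  set X : CNF := {C1, C2, C3, E} with hX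
  set D1 : Clause := insert p (insert v' {(z, true)}) with hD1
  set D2 : Clause := insert e1 (insert e2 {(z, false)}) with hD2
  set Y : CNF := {D1, D2} with hY
  have hXF : X ⊆ F := by
    intro C hC
    rcases Finset.mem_insert.1 hC with rfl | hC'
    · exact hC1F
    · rcases Finset.mem_insert.1 hC' with rfl | hC''
      · exact hC2F
      · rcases Finset.mem_insert.1 hC'' with rfl | hC'''
        · exact hC3F
        · rw [Finset.mem_singleton.1 hC''']; exact hEF
  have hsub3X : ({C1, C2, C3} : CNF) ⊆ X := by
    intro C hC
    rcases Finset.mem_insert.1 hC with rfl | hC'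
    · exact Finset.mem_insert_self _ _
    · rcases Finset.mem_insert.1 hC' with rfl | hC''
      · exact Finset.mem_insert_of_mem (Finset.mem_insert_self _ _)
      · rw [Finset.mem_singleton.1 hC'']
        exact Finset.mem_insert_of_mem (Finset.mem_insert_of_mem (Finset.mem_insert_self _ _))
  have hEX : E ∈ X := by
    rw [hX]
    exact Finset.mem_insert_of_mem (Finset.mem_insert_of_mem
      (Finset.mem_insert_of_mem (Finset.mem_singleton_self _)))
  have hmemD1 : ∀ {v : ℕ} {c : Bool}, ((v, c) : Lit) ∈ D1 → v = p.1 ∨ v = v'.1 ∨ v = z := by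
    intro v c h
    rcases Finset.mem_insert.1 h with h' | h'
    · exact Or.inl (congrArg Prod.fst h')
    · rcases Finset.mem_insert.1 h' with h'' | h''
      · exact Or.inr (Or.inl (congrArg Prod.fst h''))
      · exact Or.inr (Or.inr (congrArg Prod.fst (Finset.mem_singleton.1 h'')))
  have hmemD2 : ∀ {v : ℕ} {c : Bool}, ((v, c) : Lit) ∈ D2 → v = e1.1 ∨ v = e2.1 ∨ v = z := by
    intro v c h
    rcases Finset.mem_insert.1 h with h' | h'
    · exact Or.inl (congrArg Prod.fst h')
    · rcases Finset.mem_insert.1 h' with h'' | h''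
      · exact Or.inr (Or.inl (congrArg Prod.fst h''))
      · exact Or.inr (Or.inr (congrArg Prod.fst (Finset.mem_singleton.1 h'')))
  refine replaceLemma hF hunsat hmin X Y hXF ?_ ?_ ?_ ?_
  · have hY2 : Y.card ≤ 2 := le_trans (Finset.card_insert_le _ _) (by rw [Finset.card_singleton])
    rw [hX] at *
    rw [hcardquad]
    omega
  · intro D' hD'
    have main1 : Clause.nontaut D1 ∧ D1.card = 3 := by
      constructor
      · refine nontaut_insert (nontaut_insert (nontaut_singleton _) ?_) ?_
        · intro m hm
          rw [Finset.mem_singleton.1 hm]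
          exact hzv'
        · intro m hm
          rcases Finset.mem_insert.1 hm with rfl | hm'
          · exact hv'vp
          · rw [Finset.mem_singleton.1 hm']; exact hzp
      · have h1 : v' ∉ ({((z, true) : Lit)} : Clause) := by
          intro h
          exact hzv' (congrArg Prod.fst (Finset.mem_singleton.1 h)).symm
        have h2 : p ∉ insert v' ({((z, true) : Lit)} : Clause) := by
          intro h
          rcases Finset.mem_insert.1 h with h' | h'
          · exact hv'vp (congrArg Prod.fst h').symm
          · exact hzp (congrArg Prod.fst (Finset.mem_singleton.1 h')).symm
        rw [hD1, Finset.card_insert_of_notMem h2, Finset.card_insert_of_notMem h1,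
          Finset.card_singleton]
    have main2 : Clause.nontaut D2 ∧ D2.card = 3 := by
      constructor
      · refine nontaut_insert (nontaut_insert (nontaut_singleton _) ?_) ?_
        · intro m hm
          rw [Finset.mem_singleton.1 hm]
          exact hze2
        · intro m hm
          rcases Finset.mem_insert.1 hm with rfl | hm'
          · exact (var_ne hntE he1E he2E hee).symm
          · rw [Finset.mem_singleton.1 hm']; exact hze1
      · have h1 : e2 ∉ ({((z, false) : Lit)} : Clause) := by
          intro h
          exact hze2 (congrArg Prod.fst (Finset.mem_singleton.1 h)).symm
        have h2 : e1 ∉ insert e2 ({((z, false) : Lit)} : Clause) := by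
          intro h
          rcases Finset.mem_insert.1 h with h' | h'
          · exact hee h'
          · exact hze1 (congrArg Prod.fst (Finset.mem_singleton.1 h')).symm
        rw [hD2, Finset.card_insert_of_notMem h2, Finset.card_insert_of_notMem h1,
          Finset.card_singleton]
    rcases Finset.mem_insert.1 hD' with rfl | hD''
    · exact main1
    · rw [Finset.mem_singleton.1 hD'']; exact main2
  · -- degrees
    intro v
    have h4 := hF.2 v
    have hYv2 : (occ Y v).card ≤ 2 := by
      refine le_trans (occ_card_le v) ?_
      exact le_trans (Finset.card_insert_le _ _) (by rw [Finset.card_singleton])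
    by_cases hvz : v = z
    · subst hvz
      have hv0 : vdeg F v = 0 := by
        unfold vdeg
        rw [occ_fresh hz, Finset.card_empty]
      have := vdeg_bound (F := F) X Y v ∅ (Finset.empty_subset _)
      rw [Finset.card_empty] at this
      omega
    · by_cases hv1 : ((v, true) : Lit) ∈ D1 ∨ ((v, false) : Lit) ∈ D1
      · have hA1 : v = p.1 ∨ v = v'.1 := by
          rcases hv1 with h | h
          · rcases hmemD1 h with h' | h' | h'
            exacts [Or.inl h', Or.inr h', absurd h' hvz]
          · rcases hmemD1 h with h' | h' | h'
            exacts [Or.inl h', Or.inr h', absurd h' hvz]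
        have hA1occ : ∃ A1, A1 ∈ occ F v ∩ X ∧ A1 ≠ E := by
          rcases hA1 with rfl | rfl
          · exact ⟨C1, Finset.mem_inter.2 ⟨mem_occ hC1F hpC1, Finset.mem_insert_self _ _⟩,
              Ne.symm hE1⟩
          · exact ⟨C2, Finset.mem_inter.2 ⟨mem_occ hC2F hv'C2,
              Finset.mem_insert_of_mem (Finset.mem_insert_self _ _)⟩, Ne.symm hE2⟩
        obtain ⟨A1, hA1occ', hA1E⟩ := hA1occ
        by_cases hv2 : ((v, true) : Lit) ∈ D2 ∨ ((v, false) : Lit) ∈ D2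
        · -- v in both : W = {A1, E}
          have hA2 : v = e1.1 ∨ v = e2.1 := by
            rcases hv2 with h | h
            · rcases hmemD2 h with h' | h' | h'
              exacts [Or.inl h', Or.inr h', absurd h' hvz]
            · rcases hmemD2 h with h' | h' | h'
              exacts [Or.inl h', Or.inr h', absurd h' hvz]
          have hEocc : E ∈ occ F v ∩ X := by
            rcases hA2 with rfl | rfl
            · exact Finset.mem_inter.2 ⟨mem_occ hEF he1E, hEX⟩
            · exact Finset.mem_inter.2 ⟨mem_occ hEF he2E, hEX⟩
          refine vdeg_bound2 X Y v {A1, E} ?_ ?_ h4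
          · intro C hC
            rcases Finset.mem_insert.1 hC with rfl | hC'
            · exact hA1occ'
            · rw [Finset.mem_singleton.1 hC']; exact hEocc
          · rw [Finset.card_insert_of_notMem (by simp [hA1E]), Finset.card_singleton]
            exact hYv2
        · -- only D1
          have hsub : occ Y v ⊆ {D1} := by
            intro C hC
            rcases Finset.mem_filter.1 hC with ⟨hCY, hor⟩
            rcases Finset.mem_insert.1 hCY with rfl | hCY'
            · exact Finset.mem_singleton_self _
            · rw [Finset.mem_singleton] at hCY'
              subst hCY'
              exact absurd hor hv2
          have hle1 : (occ Y v).card ≤ 1 := by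
            refine le_trans (Finset.card_le_card hsub) ?_
            rw [Finset.card_singleton]
          refine vdeg_bound2 X Y v {A1} ?_ (by rw [Finset.card_singleton]; exact hle1) h4
          intro C hC
          rw [Finset.mem_singleton.1 hC]
          exact hA1occ'
      · by_cases hv2 : ((v, true) : Lit) ∈ D2 ∨ ((v, false) : Lit) ∈ D2
        · -- only D2 : W = {E}
          have hsub : occ Y v ⊆ {D2} := by
            intro C hC
            rcases Finset.mem_filter.1 hC with ⟨hCY, hor⟩
            rcases Finset.mem_insert.1 hCY with rfl | hCY'
            · exact absurd hor hv1
            · exact hCY'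
          have hle1 : (occ Y v).card ≤ 1 := by
            refine le_trans (Finset.card_le_card hsub) ?_
            rw [Finset.card_singleton]
          have hA2 : v = e1.1 ∨ v = e2.1 := by
            rcases hv2 with h | h
            · rcases hmemD2 h with h' | h' | h'
              exacts [Or.inl h', Or.inr h', absurd h' hvz]
            · rcases hmemD2 h with h' | h' | h'
              exacts [Or.inl h', Or.inr h', absurd h' hvz]
          have hEocc : E ∈ occ F v ∩ X := by
            rcases hA2 with rfl | rfl
            · exact Finset.mem_inter.2 ⟨mem_occ hEF he1E, hEX⟩
            · exact Finset.mem_inter.2 ⟨mem_occ hEF he2E, hEX⟩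
          refine vdeg_bound2 X Y v {E} ?_ (by rw [Finset.card_singleton]; exact hle1) h4
          intro C hC
          rw [Finset.mem_singleton.1 hC]
          exact hEocc
        · have hocc0 : occ Y v = ∅ := by
            rw [Finset.eq_empty_iff_forall_notMem]
            intro C hC
            rcases Finset.mem_filter.1 hC with ⟨hCY, hor⟩
            rcases Finset.mem_insert.1 hCY with rfl | hCY'
            · exact hv1 hor
            · rw [Finset.mem_singleton] at hCY'
              subst hCY'
              exact hv2 hor
          refine vdeg_bound2 X Y v ∅ (Finset.empty_subset _) ?_ h4
          rw [hocc0]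
  · -- satisfiability transfer
    rintro ⟨τ, hτ⟩
    have hτD1 : satClause τ D1 := hτ D1 (Finset.mem_union_right _ (Finset.mem_insert_self _ _))
    have hτD2 : satClause τ D2 := hτ D2 (Finset.mem_union_right _
      (Finset.mem_insert_of_mem (Finset.mem_singleton_self _)))
    -- generic: build assignment updating x then q.1
    have hrest : ∀ (bx bq : Bool) (D' : Clause), D' ∈ F → D' ∉ X →
        satClause (Function.update (Function.update τ x bx) q.1 bq) D' := by
      intro bx bq D' hD' hDX
      have h1 : satClause τ D' := hτ D' (Finset.mem_union_left _ (Finset.mem_sdiff.2 ⟨hD', hDX⟩))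
      have hno_x : ∀ b, ((x, b) : Lit) ∉ D' :=
        not_in_occ hD' (fun h => hDX (hsub3X (hocc ▸ h)))
      have hno_q : ∀ b, ((q.1, b) : Lit) ∉ D' :=
        not_in_occ hD' (fun h => hDX (hoccq ▸ h))
      exact sat_untouched hno_q bq (sat_untouched hno_x bx h1)
    have hvalx : ∀ (bx bq : Bool),
        Function.update (Function.update τ x bx) q.1 bq x = bx := by
      intro bx bq
      rw [Function.update_of_ne (Ne.symm hqx), Function.update_self]
    have hvalq : ∀ (bx bq : Bool),
        Function.update (Function.update τ x bx) q.1 bq q.1 = bq := fun _ _ =>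
      Function.update_self _ _ _
    have hvalother : ∀ (bx bq : Bool) (y : ℕ), y ≠ x → y ≠ q.1 →
        Function.update (Function.update τ x bx) q.1 bq y = τ y := by
      intro bx bq y hyx hyq
      rw [Function.update_of_ne hyq, Function.update_of_ne hyx]
    by_cases hτz : τ z = true
    · -- use D2 : e1 or e2 true
      obtain ⟨m, hm, hval⟩ := hτD2
      rw [hD2] at hm
      have hmE : m ∈ E ∧ m.1 ≠ x ∧ m.1 ≠ q.1 := by
        rcases Finset.mem_insert.1 hm with rfl | hm'
        · exact ⟨he1E, he1x, he1vq⟩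
        · rcases Finset.mem_insert.1 hm' with rfl | hm''
          · exact ⟨he2E, he2x, he2vq⟩
          · rw [Finset.mem_singleton] at hm''
            subst hm''
            rw [hτz] at hval
            exact absurd hval.symm (by simp)
      obtain ⟨hmE', hmx, hmq⟩ := hmE
      refine ⟨Function.update (Function.update τ x (!ε)) q.1 q.2, ?_⟩
      intro D' hD'
      by_cases hDX : D' ∈ X
      · rcases Finset.mem_insert.1 hDX with rfl | hDX'
        · exact ⟨q, hqC1, hvalq _ _⟩
        · rcases Finset.mem_insert.1 hDX' with rfl | hDX''
          · exact ⟨(x, !ε), hnl2, hvalx _ _⟩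
          · rcases Finset.mem_insert.1 hDX'' with rfl | hDX'''
            · exact ⟨(x, !ε), hnl3, hvalx _ _⟩
            · rw [Finset.mem_singleton.1 hDX''']
              exact ⟨m, hmE', by rw [hvalother _ _ _ hmx hmq]; exact hval⟩
      · exact hrest _ _ D' hD' hDX
    · -- τ z = false : use D1 : p or v' true
      obtain ⟨m, hm, hval⟩ := hτD1
      rw [hD1] at hm
      rcases Finset.mem_insert.1 hm with rfl | hm'
      · -- m = p
        refine ⟨Function.update (Function.update τ x (!ε)) q.1 (!q.2), ?_⟩
        intro D' hD'
        by_cases hDX : D' ∈ X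
        · rcases Finset.mem_insert.1 hDX with rfl | hDX'
          · exact ⟨m, hpC1, by rw [hvalother _ _ _ hpx hvpq]; exact hval⟩
          · rcases Finset.mem_insert.1 hDX' with rfl | hDX''
            · exact ⟨(x, !ε), hnl2, hvalx _ _⟩
            · rcases Finset.mem_insert.1 hDX'' with rfl | hDX'''
              · exact ⟨Lit.neg q, hnqC3, hvalq _ _⟩
              · rw [Finset.mem_singleton.1 hDX''']
                exact ⟨Lit.neg q, hnqE, hvalq _ _⟩
        · exact hrest _ _ D' hD' hDX
      · rcases Finset.mem_insert.1 hm' with rfl | hm''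
        · -- m = v'
          refine ⟨Function.update (Function.update τ x ε) q.1 (!q.2), ?_⟩
          intro D' hD'
          by_cases hDX : D' ∈ X
          · rcases Finset.mem_insert.1 hDX with rfl | hDX'
            · exact ⟨(x, ε), hl1, hvalx _ _⟩
            · rcases Finset.mem_insert.1 hDX' with rfl | hDX''
              · exact ⟨m, hv'C2, by rw [hvalother _ _ _ hv'x hv'vq]; exact hval⟩
              · rcases Finset.mem_insert.1 hDX'' with rfl | hDX'''
                · exact ⟨Lit.neg q, hnqC3, hvalq _ _⟩
                · rw [Finset.mem_singleton.1 hDX''']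
                  exact ⟨Lit.neg q, hnqE, hvalq _ _⟩
          · exact hrest _ _ D' hD' hDX
        · rw [Finset.mem_singleton] at hm''
          subst hm''
          exact absurd hval hτz

lemma ldeg_add' {F : CNF} (hK : isKCNF 3 F) (m : Lit) :
    ldeg F m + ldeg F m.neg = vdeg F m.1 := by
  obtain ⟨v, b⟩ := m
  have := ldeg_add hK v
  cases b
  · show ldeg F (v, false) + ldeg F (v, true) = vdeg F v
    omega
  · show ldeg F (v, true) + ldeg F (v, false) = vdeg F v
    omega

lemma pair_swap {C1 C2 C3 : Clause} : ({C1, C2, C3} : CNF) = {C1, C3, C2} := by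
  ext C
  simp only [Finset.mem_insert, Finset.mem_singleton]
  tauto

lemma finalCase {F : CNF} (hF : KS 3 4 F) (hunsat : ¬ Satisfiable F)
    (hmin : ∀ G : CNF, KS 3 4 G → ¬ Satisfiable G → F.card ≤ G.card)
    {x : ℕ} {ε : Bool} {C1 C2 C3 : Clause}
    (hocc : occ F x = {C1, C2, C3})
    (hC1F : C1 ∈ F) (hC2F : C2 ∈ F) (hC3F : C3 ∈ F)
    (hl1 : (x, ε) ∈ C1) (hnl2 : (x, !ε) ∈ C2) (hnl3 : (x, !ε) ∈ C3)
    {p q : Lit}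
    (hpC1 : p ∈ C1) (hqC1 : q ∈ C1) (hpq : p ≠ q) (hpx : p.1 ≠ x) (hqx : q.1 ≠ x)
    (hd12 : C1 ≠ C2) (hd13 : C1 ≠ C3) (hd23 : C2 ≠ C3)
    (hnHp : ¬ (vdeg F p.1 ≤ (occ F p.1 ∩ {C1, C2, C3}).card + 2))
    (hncq : q ∉ C2 ∨ q ∉ C3)
    (hP1q : ¬(Lit.neg q ∈ C2 ∧ Lit.neg q ∈ C3))
    (hEq : ∃ D ∈ F, Lit.neg q ∈ D ∧ D ≠ C2 ∧ D ≠ C3) : False := by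
  have h4p := hF.2 p.1
  have hlt : (occ F p.1 ∩ {C1, C2, C3}).card + 2 < vdeg F p.1 := Nat.not_le.1 hnHp
  have hinter1 : (occ F p.1 ∩ {C1, C2, C3}).card ≤ 1 := by omega
  have hC1in : C1 ∈ occ F p.1 ∩ ({C1, C2, C3} : CNF) :=
    Finset.mem_inter.2 ⟨mem_occ hC1F hpC1, Finset.mem_insert_self _ _⟩
  have hp2 : ∀ b, ((p.1, b) : Lit) ∉ C2 := by
    intro b hb
    have hC2in : C2 ∈ occ F p.1 ∩ ({C1, C2, C3} : CNF) :=
      Finset.mem_inter.2 ⟨mem_occ (m := ((p.1, b) : Lit)) hC2F hb,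
        Finset.mem_insert_of_mem (Finset.mem_insert_self _ _)⟩
    have hsub : ({C1, C2} : CNF) ⊆ occ F p.1 ∩ {C1, C2, C3} := by
      intro C hC
      rcases Finset.mem_insert.1 hC with rfl | hC'
      · exact hC1in
      · rw [Finset.mem_singleton.1 hC']; exact hC2in
    have hc : ({C1, C2} : CNF).card = 2 := by
      rw [Finset.card_insert_of_notMem (by simp [hd12]), Finset.card_singleton]
    have := Finset.card_le_card hsub
    omega
  have hp3 : ∀ b, ((p.1, b) : Lit) ∉ C3 := by
    intro b hb
    have hC3in : C3 ∈ occ F p.1 ∩ ({C1, C2, C3} : CNF) :=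
      Finset.mem_inter.2 ⟨mem_occ (m := ((p.1, b) : Lit)) hC3F hb,
        Finset.mem_insert_of_mem (Finset.mem_insert_of_mem (Finset.mem_singleton_self _))⟩
    have hsub : ({C1, C3} : CNF) ⊆ occ F p.1 ∩ {C1, C2, C3} := by
      intro C hC
      rcases Finset.mem_insert.1 hC with rfl | hC'
      · exact hC1in
      · rw [Finset.mem_singleton.1 hC']; exact hC3in
    have hc : ({C1, C3} : CNF).card = 2 := by
      rw [Finset.card_insert_of_notMem (by simp [hd13]), Finset.card_singleton]
    have := Finset.card_le_card hsub
    omega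
  by_cases hq3v : ((q.1, true) : Lit) ∈ C3 ∨ ((q.1, false) : Lit) ∈ C3
  · by_cases hq2v : ((q.1, true) : Lit) ∈ C2 ∨ ((q.1, false) : Lit) ∈ C2
    · -- q's variable occurs in both C2 and C3
      have hq2' : q ∈ C2 ∨ Lit.neg q ∈ C2 := by
        rcases hq2v with h | h
        · rcases lit_eq_or_neg (show ((q.1, true) : Lit).1 = q.1 from rfl) with h' | h'
          · exact Or.inl (h' ▸ h)
          · exact Or.inr (h' ▸ h)
        · rcases lit_eq_or_neg (show ((q.1, false) : Lit).1 = q.1 from rfl) with h' | h'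
          · exact Or.inl (h' ▸ h)
          · exact Or.inr (h' ▸ h)
      have hq3' : q ∈ C3 ∨ Lit.neg q ∈ C3 := by
        rcases hq3v with h | h
        · rcases lit_eq_or_neg (show ((q.1, true) : Lit).1 = q.1 from rfl) with h' | h'
          · exact Or.inl (h' ▸ h)
          · exact Or.inr (h' ▸ h)
        · rcases lit_eq_or_neg (show ((q.1, false) : Lit).1 = q.1 from rfl) with h' | h'
          · exact Or.inl (h' ▸ h)
          · exact Or.inr (h' ▸ h)
      obtain ⟨E, hEF, hnqE, hE2, hE3⟩ := hEq
      rcases hq2' with hq2 | hnq2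
      · rcases hq3' with hq3 | hnq3
        · rcases hncq with h | h
          exacts [h hq2, h hq3]
        · exact strategyE hF hunsat hmin hocc hC1F hC2F hC3F hl1 hnl2 hnl3 hpC1 hqC1 hpq
            hpx hqx hd12 hd13 hd23 hp2 hp3 hq2 hnq3 hEF hnqE hE2 hE3
      · rcases hq3' with hq3 | hnq3
        · exact strategyE hF hunsat hmin (hocc.trans pair_swap) hC1F hC3F hC2F hl1 hnl3 hnl2
            hpC1 hqC1 hpq hpx hqx hd13 hd12 hd23.symm hp3 hp2 hq3 hnq2 hEF hnqE hE3 hE2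
        · exact hP1q ⟨hnq2, hnq3⟩
    · -- q's variable avoids C2 : swap roles of C2 and C3
      have hq2 : ∀ b, ((q.1, b) : Lit) ∉ C2 := by
        intro b hb
        cases b
        · exact hq2v (Or.inr hb)
        · exact hq2v (Or.inl hb)
      exact strategyA hF hunsat hmin (hocc.trans pair_swap) hC1F hC3F hC2F hl1 hnl3 hnl2
        hpC1 hqC1 hpq hpx hqx hd13 hd12 hd23.symm hp3 hq2
  · -- q's variable avoids C3 : direct strategy A
    have hq3 : ∀ b, ((q.1, b) : Lit) ∉ C3 := by
      intro b hb
      cases b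
      · exact hq3v (Or.inr hb)
      · exact hq3v (Or.inl hb)
    exact strategyA hF hunsat hmin hocc hC1F hC2F hC3F hl1 hnl2 hnl3 hpC1 hqC1 hpq
      hpx hqx hd12 hd13 hd23 hp2 hq3

lemma companion {F : CNF} (hF : KS 3 4 F) (hunsat : ¬ Satisfiable F)
    (hmin : ∀ G : CNF, KS 3 4 G → ¬ Satisfiable G → F.card ≤ G.card)
    {x : ℕ} (hx : vdeg F x = 3) :
    ∃ a : Lit, a.1 ≠ x ∧ ∀ C ∈ occ F x, a ∈ C := by
  have hK := hF.1
  have hvx1 : 1 ≤ vdeg F x := by omega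
  have h1t := nopure (v := x) hF hunsat hmin hvx1 true
  have h1f := nopure (v := x) hF hunsat hmin hvx1 false
  have hsumx := ldeg_add hK x
  rw [hx] at hsumx
  obtain ⟨ε, hl1deg, hl2deg⟩ : ∃ ε : Bool, ldeg F (x, ε) = 1 ∧ ldeg F (x, !ε) = 2 := by
    by_cases h : ldeg F (x, true) = 1
    · refine ⟨true, h, ?_⟩
      show ldeg F (x, false) = 2
      omega
    · refine ⟨false, by omega, ?_⟩
      show ldeg F (x, true) = 2
      omega
  have hl1deg' : (F.filter (fun C => ((x, ε) : Lit) ∈ C)).card = 1 := hl1deg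
  have hl2deg' : (F.filter (fun C => ((x, !ε) : Lit) ∈ C)).card = 2 := hl2deg
  obtain ⟨C1, hFT⟩ := Finset.card_eq_one.1 hl1deg'
  obtain ⟨C2, C3, hd23, hFF⟩ := Finset.card_eq_two.1 hl2deg'
  have hC1mem : C1 ∈ F.filter (fun C => ((x, ε) : Lit) ∈ C) := by
    rw [hFT]; exact Finset.mem_singleton_self _
  have hC1F : C1 ∈ F := (Finset.mem_filter.1 hC1mem).1
  have hl1 : ((x, ε) : Lit) ∈ C1 := (Finset.mem_filter.1 hC1mem).2
  have hC2mem : C2 ∈ F.filter (fun C => ((x, !ε) : Lit) ∈ C) := by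
    rw [hFF]; exact Finset.mem_insert_self _ _
  have hC2F : C2 ∈ F := (Finset.mem_filter.1 hC2mem).1
  have hnl2 : ((x, !ε) : Lit) ∈ C2 := (Finset.mem_filter.1 hC2mem).2
  have hC3mem : C3 ∈ F.filter (fun C => ((x, !ε) : Lit) ∈ C) := by
    rw [hFF]; exact Finset.mem_insert_of_mem (Finset.mem_singleton_self _)
  have hC3F : C3 ∈ F := (Finset.mem_filter.1 hC3mem).1
  have hnl3 : ((x, !ε) : Lit) ∈ C3 := (Finset.mem_filter.1 hC3mem).2
  have hnt1 : Clause.nontaut C1 := (hK C1 hC1F).1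
  have hnt2 : Clause.nontaut C2 := (hK C2 hC2F).1
  have hd12 : C1 ≠ C2 := by
    intro h
    exact hnt1 (x, ε) hl1 (h ▸ hnl2)
  have hd13 : C1 ≠ C3 := by
    intro h
    exact hnt1 (x, ε) hl1 (h ▸ hnl3)
  have hocc : occ F x = {C1, C2, C3} := by
    have hofilter : occ F x =
        F.filter (fun C => ((x, ε) : Lit) ∈ C) ∪ F.filter (fun C => ((x, !ε) : Lit) ∈ C) := by
      ext C
      simp only [occ, Finset.mem_union, Finset.mem_filter]
      cases ε
      · simp only [Bool.not_false]
        tauto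
      · simp only [Bool.not_true]
        tauto
    rw [hofilter, hFT, hFF]
    ext C
    simp only [Finset.mem_union, Finset.mem_insert, Finset.mem_singleton]
  -- extract p, q from C1
  have hc1 : C1.card = 3 := (hK C1 hC1F).2
  have herase : (C1.erase (x, ε)).card = 2 := by
    rw [Finset.card_erase_of_mem hl1, hc1]
  obtain ⟨p, q, hpq, hpqset⟩ := Finset.card_eq_two.1 herase
  have hpe : p ∈ C1.erase (x, ε) := by rw [hpqset]; exact Finset.mem_insert_self _ _
  have hqe : q ∈ C1.erase (x, ε) := by
    rw [hpqset]; exact Finset.mem_insert_of_mem (Finset.mem_singleton_self _)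
  have hpC1 : p ∈ C1 := Finset.mem_of_mem_erase hpe
  have hqC1 : q ∈ C1 := Finset.mem_of_mem_erase hqe
  have hpx : p.1 ≠ x := var_ne (m' := ((x, ε) : Lit)) hnt1 hpC1 hl1 (Finset.ne_of_mem_erase hpe)
  have hqx : q.1 ≠ x := var_ne (m' := ((x, ε) : Lit)) hnt1 hqC1 hl1 (Finset.ne_of_mem_erase hqe)
  -- suppose no companion
  by_contra hcomp
  push_neg at hcomp
  have hnc : ∀ r : Lit, r ∈ C1 → r.1 ≠ x → r ∉ C2 ∨ r ∉ C3 := by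
    intro r hr hrx
    obtain ⟨C, hC, hnot⟩ := hcomp r hrx
    rw [hocc] at hC
    rcases Finset.mem_insert.1 hC with rfl | hC'
    · exact absurd hr hnot
    · rcases Finset.mem_insert.1 hC' with rfl | hC''
      · exact Or.inl hnot
      · rw [Finset.mem_singleton] at hC''
        subst hC''
        exact Or.inr hnot
  have hP1 : ∀ r : Lit, r ∈ C1 → r.1 ≠ x → ¬(Lit.neg r ∈ C2 ∧ Lit.neg r ∈ C3) := by
    rintro r hr hrx ⟨h2, h3⟩
    exact strategyP1 hF hunsat hmin hocc hC1F hl1 hr hrx h2 h3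
  have hEex : ∀ r : Lit, r ∈ C1 → r.1 ≠ x → ∃ D ∈ F, Lit.neg r ∈ D ∧ D ≠ C2 ∧ D ≠ C3 := by
    intro r hr hrx
    by_contra h
    push_neg at h
    refine strategyF hF hunsat hmin hocc hC1F hnl2 hnl3 hr hrx ?_
    intro D hD hmem
    by_cases hDC2 : D = C2
    · exact Or.inl hDC2
    · exact Or.inr (h D hD hmem hDC2)
  by_cases hHp : vdeg F p.1 ≤ (occ F p.1 ∩ {C1, C2, C3}).card + 2
  · by_cases hHq : vdeg F q.1 ≤ (occ F q.1 ∩ {C1, C2, C3}).card + 2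
    · exact strategyD hF hunsat hmin hocc hC1F hC2F hC3F hl1 hnl2 hnl3 hpC1 hqC1 hpq
        hpx hqx hd12 hd13 hd23 hHp hHq
    · exact finalCase hF hunsat hmin hocc hC1F hC2F hC3F hl1 hnl2 hnl3 hqC1 hpC1 hpq.symm
        hqx hpx hd12 hd13 hd23 hHq (hnc p hpC1 hpx) (hP1 p hpC1 hpx) (hEex p hpC1 hpx)
  · exact finalCase hF hunsat hmin hocc hC1F hC2F hC3F hl1 hnl2 hnl3 hpC1 hqC1 hpq
      hpx hqx hd12 hd13 hd23 hHp (hnc q hqC1 hqx) (hP1 q hqC1 hqx) (hEex q hqC1 hqx)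

theorem stmt16 (F : CNF) (hF : KS 3 4 F) (hunsat : ¬ Satisfiable F)
    (hmin : ∀ G : CNF, KS 3 4 G → ¬ Satisfiable G → F.card ≤ G.card)
    (x w : ℕ) (hxw : x ≠ w) (hx : vdeg F x = 3) (hw : vdeg F w = 3) :
    Disjoint (occ F x) (occ F w) := by
  by_contra hdis
  obtain ⟨C, hCx, hCw⟩ := Finset.not_disjoint_iff.1 hdis
  have hCF : C ∈ F := Finset.mem_of_mem_filter _ hCx
  have hCnt : Clause.nontaut C := (hF.1 C hCF).1
  have hC3 : C.card = 3 := (hF.1 C hCF).2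
  obtain ⟨a, hax, ha⟩ := companion hF hunsat hmin hx
  obtain ⟨b, hbw, hb⟩ := companion hF hunsat hmin hw
  -- companion of x is not a w-literal
  have hldegall : ∀ (u : ℕ) (m : Lit), (∀ D ∈ occ F u, m ∈ D) → vdeg F u ≤ ldeg F m := by
    intro u m hm
    have hsub : occ F u ⊆ F.filter (fun C => m ∈ C) := by
      intro D hD
      exact Finset.mem_filter.2 ⟨Finset.mem_of_mem_filter _ hD, hm D hD⟩
    exact Finset.card_le_card hsub
  have keycontra : ∀ m : Lit, 3 ≤ ldeg F m → vdeg F m.1 = 3 → False := by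
    intro m h3 h4
    have hsum : ldeg F m + ldeg F m.neg = vdeg F m.1 := ldeg_add' hF.1 m
    have h1 : 1 ≤ ldeg F m.neg := by
      have hv1 : 1 ≤ vdeg F m.1 := by omega
      exact nopure (v := m.1) hF hunsat hmin hv1 (!m.2)
    omega
  have keyvar : ∀ m : Lit, (∀ D ∈ occ F x, m ∈ D) → m.1 ≠ w := by
    intro m hm hmw
    have h3 := hldegall x m hm
    exact keycontra m (by omega) (by rw [hmw]; exact hw)
  have keyvarx : ∀ m : Lit, (∀ D ∈ occ F w, m ∈ D) → m.1 ≠ x := by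
    intro m hm hmx
    have h3 := hldegall w m hm
    exact keycontra m (by omega) (by rw [hmx]; exact hx)
  have haw : a.1 ≠ w := keyvar a ha
  have hbx : b.1 ≠ x := keyvarx b hb
  obtain ⟨-, hbx'⟩ := Finset.mem_filter.1 hCx
  obtain ⟨-, hbw'⟩ := Finset.mem_filter.1 hCw
  obtain ⟨bx, hlx⟩ : ∃ bb, (x, bb) ∈ C := by
    rcases hbx' with h | h
    exacts [⟨true, h⟩, ⟨false, h⟩]
  obtain ⟨bw, hlw⟩ : ∃ bb, (w, bb) ∈ C := by
    rcases hbw' with h | h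
    exacts [⟨true, h⟩, ⟨false, h⟩]
  have haC : a ∈ C := ha C hCx
  have hbC : b ∈ C := hb C hCw
  -- a = b
  have hab : a = b := by
    by_contra hne
    have hsub4 : ({(x, bx), (w, bw), a, b} : Clause) ⊆ C := by
      intro m hm
      simp only [Finset.mem_insert, Finset.mem_singleton] at hm
      rcases hm with rfl | rfl | rfl | rfl <;> assumption
    have hcard4 : ({(x, bx), (w, bw), a, b} : Clause).card = 4 := by
      rw [Finset.card_insert_of_notMem, Finset.card_insert_of_notMem,
        Finset.card_insert_of_notMem, Finset.card_singleton]
      · simp only [Finset.mem_singleton]; exact hne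
      · simp only [Finset.mem_insert, Finset.mem_singleton]
        push_neg
        constructor
        · intro h; exact haw (congrArg Prod.fst h).symm
        · intro h; exact hbw (congrArg Prod.fst h).symm
      · simp only [Finset.mem_insert, Finset.mem_singleton]
        push_neg
        refine ⟨fun h => hxw (congrArg Prod.fst h), ?_, ?_⟩
        · intro h; exact hax (congrArg Prod.fst h).symm
        · intro h; exact hbx (congrArg Prod.fst h).symm
    have := Finset.card_le_card hsub4
    omega
  subst hab
  -- occ F x = occ F w
  have hva : 1 ≤ vdeg F a.1 := by
    have : C ∈ occ F a.1 := mem_occ hCF haC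
    have := Finset.card_pos.2 ⟨C, this⟩
    unfold vdeg; omega
  have hldega : ldeg F a ≤ 3 := by
    have hsum := ldeg_add' hF.1 a
    have h1 : 1 ≤ ldeg F a.neg := nopure hF hunsat hmin hva (!a.2)
    have h4 := hF.2 a.1
    omega
  have hUsub : occ F x ∪ occ F w ⊆ F.filter (fun C => a ∈ C) := by
    intro D hD
    rcases Finset.mem_union.1 hD with h | h
    · exact Finset.mem_filter.2 ⟨Finset.mem_of_mem_filter _ h, ha D h⟩
    · exact Finset.mem_filter.2 ⟨Finset.mem_of_mem_filter _ h, hb D h⟩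
  have hUcard : (occ F x ∪ occ F w).card ≤ 3 := by
    have := Finset.card_le_card hUsub
    unfold ldeg at hldega; omega
  have hocceq : occ F w = occ F x := by
    have h1 : occ F x ∪ occ F w = occ F x := by
      refine (Finset.eq_of_subset_of_card_le Finset.subset_union_left ?_).symm
      · unfold vdeg at hx; omega
    have h2 : occ F w ⊆ occ F x := by
      rw [← h1]; exact Finset.subset_union_right
    exact Finset.eq_of_subset_of_card_le h2 (by unfold vdeg at hx hw; omega)
  -- final construction
  have h1t := nopure hF hunsat hmin (show 1 ≤ vdeg F x by omega) true
  have h1f := nopure hF hunsat hmin (show 1 ≤ vdeg F x by omega) false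
  have hsumx := ldeg_add hF.1 x
  rw [hx] at hsumx
  obtain ⟨ε, hl1⟩ : ∃ ε, ldeg F (x, ε) = 1 := by
    by_cases h : ldeg F (x, true) = 1
    · exact ⟨true, h⟩
    · exact ⟨false, by omega⟩
  obtain ⟨C1, hC1⟩ := Finset.card_eq_one.1 hl1
  have hC1F : C1 ∈ F := by
    have : C1 ∈ F.filter (fun C => (x, ε) ∈ C) := by rw [hC1]; exact Finset.mem_singleton_self _
    exact Finset.mem_of_mem_filter _ this
  have hlC1 : (x, ε) ∈ C1 := by
    have : C1 ∈ F.filter (fun C => (x, ε) ∈ C) := by rw [hC1]; exact Finset.mem_singleton_self _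
    exact (Finset.mem_filter.1 this).2
  have hC1occx : C1 ∈ occ F x := mem_occ hC1F hlC1
  have hC1occw : C1 ∈ occ F w := hocceq ▸ hC1occx
  obtain ⟨δ, hδ⟩ : ∃ δ, (w, δ) ∈ C1 := by
    rcases (Finset.mem_filter.1 hC1occw).2 with h | h
    exacts [⟨true, h⟩, ⟨false, h⟩]
  -- satisfy F \ occ F x and flip x, w
  have hsub : F \ occ F x ⊆ F := Finset.sdiff_subset
  have hlt : (F \ occ F x).card < F.card := by
    have : C1 ∉ F \ occ F x := fun hh => (Finset.mem_sdiff.1 hh).2 hC1occx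
    exact Finset.card_lt_card ⟨hsub, fun hss => this (hss hC1F)⟩
  obtain ⟨τ, hτ⟩ := sat_of_card_lt hmin (KS_subset hsub hF) hlt
  set σ := Function.update (Function.update τ x (!ε)) w δ with hσ
  refine hunsat ⟨σ, ?_⟩
  intro D hD
  by_cases hDocc : D ∈ occ F x
  · by_cases hDC1 : (x, ε) ∈ D
    · have : D = C1 := by
        have : D ∈ F.filter (fun C => (x, ε) ∈ C) := Finset.mem_filter.2 ⟨hD, hDC1⟩
        rw [hC1] at this; exact Finset.mem_singleton.1 this
      subst this
      exact ⟨(w, δ), hδ, Function.update_self _ _ _⟩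
    · have hnl : (x, !ε) ∈ D := by
        rcases (Finset.mem_filter.1 hDocc).2 with h | h
        · cases ε
          · exact h
          · exact absurd h hDC1
        · cases ε
          · exact absurd h hDC1
          · exact h
      refine ⟨(x, !ε), hnl, ?_⟩
      show σ x = !ε
      rw [hσ, Function.update_of_ne hxw, Function.update_self]
  · refine satClause_congr ?_ (hτ D (Finset.mem_sdiff.2 ⟨hD, hDocc⟩))
    intro m hm
    have hmx : m.1 ≠ x := fun h => hDocc (h ▸ mem_occ hD hm)
    have hmw : m.1 ≠ w := fun h => (hocceq ▸ hDocc : D ∉ occ F w) (h ▸ mem_occ hD hm)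
    have : Function.update (Function.update τ x !ε) w δ m.1 = τ m.1 := by
      rw [Function.update_of_ne hmw, Function.update_of_ne hmx]
    exact this.symm
end

section
/- Every (3,3)-formula is satisfiable: if every clause has exactly 3 distinct literals and every variable occurs in at most 3 clauses, there is a satisfying assignment. -/
theorem stmt18 (F : CNF) (hF : KS 3 3 F) : Satisfiable F := by
  classical
  obtain ⟨hk, hs⟩ := hF
  set V : Clause → Finset ℕ := fun C => C.image Prod.fst with hV
  -- each clause has exactly 3 variables
  have hVcard : ∀ C ∈ F, (V C).card = 3 := by
    intro C hC
    obtain ⟨hnt, hcard⟩ := hk C hC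
    rw [hV]
    rw [Finset.card_image_of_injOn, hcard]
    intro l hl m hm hlm
    by_contra hne
    have hb : l.2 ≠ m.2 := fun h => hne (Prod.ext hlm h)
    have : m = Lit.neg l := by
      rcases l with ⟨lv, lb⟩; rcases m with ⟨mv, mb⟩
      cases lb <;> cases mb <;> simp_all [Lit.neg]
    exact hnt l hl (this ▸ hm)
  -- Hall condition
  have hall : ∀ s : Finset {C // C ∈ F}, s.card ≤ (s.biUnion (fun C => V C.1)).card := by
    intro s
    set t := s.biUnion (fun C => V C.1) with ht
    have key := Finset.card_mul_le_card_mul (s := s) (t := t)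
      (fun C v => v ∈ V C.1) (m := 3) (n := 3) ?_ ?_
    · omega
    · intro C hC
      have hsub : V C.1 ⊆ t.bipartiteAbove (fun C v => v ∈ V C.1) C := by
        intro v hv
        simp only [Finset.bipartiteAbove, Finset.mem_filter]
        exact ⟨Finset.mem_biUnion.mpr ⟨C, hC, hv⟩, hv⟩
      calc 3 = (V C.1).card := (hVcard C.1 C.2).symm
        _ ≤ _ := Finset.card_le_card hsub
    · intro v hv
      calc (s.bipartiteBelow (fun C v => v ∈ V C.1) v).card
          ≤ (occ F v).card := by
            apply Finset.card_le_card_of_injOn (fun C => C.1)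
            · intro C hC
              simp only [Finset.mem_coe, Finset.bipartiteBelow, Finset.mem_filter, hV,
                Finset.mem_image] at hC
              obtain ⟨_, l, hl, hl1⟩ := hC
              simp only [Finset.mem_coe, occ, Finset.mem_filter]
              refine ⟨C.2, ?_⟩
              rcases Bool.dichotomy l.2 with h | h
              · right; rw [← hl1, ← h]; exact hl
              · left; rw [← hl1, ← h]; exact hl
            · intro a _ b _ hab
              exact Subtype.ext hab
        _ ≤ 3 := hs v
  obtain ⟨f, hfinj, hfmem⟩ :=
    (Finset.all_card_le_biUnion_card_iff_existsInjective' (fun C : {C // C ∈ F} => V C.1)).mp hall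
  -- define assignment
  set τ : ℕ → Bool := fun v =>
    if h : ∃ C : {C // C ∈ F}, f C = v then
      (if (v, true) ∈ h.choose.1 then true else false)
    else true with hτ
  refine ⟨τ, ?_⟩
  intro C hC
  set c : {C // C ∈ F} := ⟨C, hC⟩
  have h : ∃ C' : {C // C ∈ F}, f C' = f c := ⟨c, rfl⟩
  have hch : h.choose = c := hfinj h.choose_spec
  have hv : f c ∈ V C := hfmem c
  simp only [hV, Finset.mem_image] at hv
  obtain ⟨l, hl, hl1⟩ := hv
  refine ⟨(f c, τ (f c)), ?_, rfl⟩
  rw [hτ]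
  simp only [dif_pos h, hch]
  by_cases hpos : (f c, true) ∈ C
  · simp [hpos, show (c : Clause) = C from rfl]
  · simp only [show (c : Clause) = C from rfl, hpos, decide_false]
    rcases Bool.dichotomy l.2 with h2 | h2
    · rw [← hl1, ← h2]; exact hl
    · exact absurd (show (f c, true) ∈ C by rw [← hl1, ← h2]; exact hl) hpos
end
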